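/- arXiv:2105.11799 — 2 statements merged into one kernel-verified Lean document; each statement's English description precedes it below -/
import Mathlib

section
/- Under the standing setup, for every vertex v ∈ V(G) ∖ V(C), either v is almost C-dominating, or |N_G(v) ∩ V(C)| ≤ 3 and the vertices of N_G(v) ∩ V(C) are consecutive along C (i.e. they are the vertex set of a subpath of C on at most 3 vertices). -/
open SimpleGraph

variable {V : Type}

/-- The graph `G − S`: delete the vertices in `S` (keep the same vertex type; deleted
vertices become isolated). -/
def SimpleGraph.del (G : SimpleGraph V) (S : Set V) : SimpleGraph V where
  Adj x y := G.Adj x y ∧ x ∉ S ∧ y ∉ S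
  symm := by
    constructor
    intro x y h
    exact ⟨h.1.symm, h.2.2, h.2.1⟩
  loopless := by
    constructor
    intro x h
    exact G.irrefl h.1

theorem SimpleGraph.del_le (G : SimpleGraph V) (S : Set V) : G.del S ≤ G := by
  intro x y h
  exact h.1

/-- The closed neighborhood `N_G[S]` of a set of vertices. -/
def closedNbhd (G : SimpleGraph V) (S : Set V) : Set V :=
  S ∪ {x | ∃ s ∈ S, G.Adj x s}

/-- A hole: an induced (chordless) cycle of length at least 4, given as a closed walk. -/
def IsHoleW (G : SimpleGraph V) {v : V} (w : G.Walk v v) : Prop :=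
  w.IsCycle ∧ 4 ≤ w.length ∧
    ∀ x ∈ w.support, ∀ y ∈ w.support, G.Adj x y → w.toSubgraph.Adj x y

/-- A long hole: an induced (chordless) cycle of length at least 6. -/
def IsLongHoleW (G : SimpleGraph V) {v : V} (w : G.Walk v v) : Prop :=
  w.IsCycle ∧ 6 ≤ w.length ∧
    ∀ x ∈ w.support, ∀ y ∈ w.support, G.Adj x y → w.toSubgraph.Adj x y

/-- A graph is `C4`-free if it has no induced cycle of length 4. -/
def C4Free (G : SimpleGraph V) : Prop :=
  ¬ ∃ (v : V) (w : G.Walk v v), w.IsCycle ∧ w.length = 4 ∧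
      ∀ x ∈ w.support, ∀ y ∈ w.support, G.Adj x y → w.toSubgraph.Adj x y

def NoLongHole (G : SimpleGraph V) : Prop :=
  ∀ (v : V) (w : G.Walk v v), ¬ IsLongHoleW G w

def NoHole (G : SimpleGraph V) : Prop :=
  ∀ (v : V) (w : G.Walk v v), ¬ IsHoleW G w

/-- `s_k = 4k(log k + log log k + 4)` for `k ≥ 2`, and `s_1 = 2`. -/
noncomputable def sK (k : ℕ) : ℝ :=
  if 2 ≤ k then 4 * k * (Real.log k + Real.log (Real.log k) + 4) else 2

/-- `μ_k = 88575 k + 24003 s_k`. -/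
noncomputable def muK (k : ℕ) : ℝ := 88575 * k + 24003 * sK k

/-- `G` contains `k` pairwise vertex-disjoint long holes. -/
def HasLongHolePacking (G : SimpleGraph V) (k : ℕ) : Prop :=
  ∃ (a : Fin k → V) (w : (i : Fin k) → G.Walk (a i) (a i)),
    (∀ i, IsLongHoleW G (w i)) ∧
    ∀ i j, i ≠ j → ∀ x ∈ (w i).support, x ∉ (w j).support

/-- `G` contains `k` pairwise vertex-disjoint holes. -/
def HasHolePacking (G : SimpleGraph V) (k : ℕ) : Prop :=
  ∃ (a : Fin k → V) (w : (i : Fin k) → G.Walk (a i) (a i)),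
    (∀ i, IsHoleW G (w i)) ∧
    ∀ i j, i ≠ j → ∀ x ∈ (w i).support, x ∉ (w j).support

/-- The distance between two vertices measured in the cycle `C` (given as a closed walk `c`). -/
noncomputable def distW (G : SimpleGraph V) {v0 : V} (c : G.Walk v0 v0) (x y : V) : ℕ :=
  c.toSubgraph.spanningCoe.dist x y

/-- A vertex `u ∉ V(C)` is almost `C`-dominating: it has at least two neighbors on `C`, and
its neighbors on `C` can be enumerated cyclically so that consecutive ones are at
`C`-distance 1 or 3. -/
def AlmostDom (G : SimpleGraph V) {v0 : V} (c : G.Walk v0 v0) (u : V) : Prop :=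
  u ∉ c.support ∧
  ∃ l : List V, l.Nodup ∧ 2 ≤ l.length ∧
    (∀ x, x ∈ l ↔ x ∈ c.support ∧ G.Adj u x) ∧
    ∀ i : Fin l.length,
      distW G c (l.get i) (l.get ⟨((i : ℕ) + 1) % l.length, Nat.mod_lt _ i.pos⟩)
        ∈ ({1, 3} : Set ℕ)

/-- Data for an ear decomposition of a subgraph of `G`: `n` ears, the `i`-th one being a
walk from `A i` to `B i`. -/
structure EarData (G : SimpleGraph V) : Type _ where
  n : ℕ
  A : Fin n → V
  B : Fin n → V
  ear : (i : Fin n) → G.Walk (A i) (B i)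

/-- The subgraph `C ∪ P_1 ∪ ⋯ ∪ P_j` (ears of index `< j`). -/
def EarData.prev {G : SimpleGraph V} (d : EarData G) {v0 : V} (c : G.Walk v0 v0) (j : ℕ) :
    G.Subgraph :=
  c.toSubgraph ⊔ ⨆ i : Fin d.n, ⨆ _ : (i : ℕ) < j, (d.ear i).toSubgraph

/-- The subgraph `C ∪ P_1 ∪ ⋯ ∪ P_ℓ`. -/
def EarData.whole {G : SimpleGraph V} (d : EarData G) {v0 : V} (c : G.Walk v0 v0) :
    G.Subgraph :=
  d.prev c d.n

/-- A subgraph has maximum degree at most 3. -/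
def MaxDeg3 {G : SimpleGraph V} (H : G.Subgraph) : Prop :=
  ∀ v : V, (H.neighborSet v).ncard ≤ 3

/-- `p` qualifies as an ear attached to the subgraph `H` (relative to the cycle `c`):
`p = p_0 ⋯ p_m` is a path of length `m ≥ 6` with `p_0 ∈ V(C)`, its other end in `H`,
all internal vertices outside `H`, `p − {p_0, p_m}` induced in `G`, and no vertex of
`{p_2, p_3, p_4}` has a neighbor in `H`. -/
def IsEarOf (G : SimpleGraph V) {v0 : V} (c : G.Walk v0 v0) (H : G.Subgraph)
    {a b : V} (p : G.Walk a b) : Prop :=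
  p.IsPath ∧ 6 ≤ p.length ∧ a ∈ c.support ∧ b ∈ H.verts ∧
  (∀ x ∈ p.support, x ≠ a → x ≠ b → x ∉ H.verts) ∧
  (∀ x ∈ p.support, x ≠ a → x ≠ b → ∀ y ∈ p.support, y ≠ a → y ≠ b →
      G.Adj x y → p.toSubgraph.Adj x y) ∧
  (∀ j ∈ ({2, 3, 4} : Set ℕ), ∀ y ∈ H.verts, ¬ G.Adj (p.getVert j) y)

/-- `d` is a sparse ear decomposition in `G` (relative to the cycle `c`). -/
def IsSED (G : SimpleGraph V) {v0 : V} (c : G.Walk v0 v0) (d : EarData G) : Prop :=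
  MaxDeg3 (d.whole c) ∧ ∀ i : Fin d.n, IsEarOf G c (d.prev c (i : ℕ)) (d.ear i)

/-- The path `p` extends the sparse ear decomposition `d`: adding `p` as a new ear again
gives a sparse ear decomposition. -/
def ExtendsSED (G : SimpleGraph V) {v0 : V} (c : G.Walk v0 v0) (d : EarData G)
    {a b : V} (p : G.Walk a b) : Prop :=
  IsEarOf G c (d.whole c) p ∧ MaxDeg3 (d.whole c ⊔ p.toSubgraph)

/-- A good sparse ear decomposition: each ear extends the previous partial decomposition,
meets `C` in as many vertices as possible, and subject to that is shortest. -/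
def GoodSED (G : SimpleGraph V) {v0 : V} (c : G.Walk v0 v0) (d : EarData G) : Prop :=
  IsSED G c d ∧ ∀ i : Fin d.n,
    (∀ (x y : V) (q : G.Walk x y),
        IsEarOf G c (d.prev c (i : ℕ)) q → MaxDeg3 (d.prev c (i : ℕ) ⊔ q.toSubgraph) →
          ({z | z ∈ q.support ∧ z ∈ c.support}).ncard ≤
            ({z | z ∈ (d.ear i).support ∧ z ∈ c.support}).ncard) ∧
    (∀ (x y : V) (q : G.Walk x y),
        IsEarOf G c (d.prev c (i : ℕ)) q → MaxDeg3 (d.prev c (i : ℕ) ⊔ q.toSubgraph) →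
          ({z | z ∈ q.support ∧ z ∈ c.support}).ncard =
            ({z | z ∈ (d.ear i).support ∧ z ∈ c.support}).ncard →
          (d.ear i).length ≤ q.length)

/-- An appendage of the sparse ear decomposition `d`: a cycle `F = v_0 v_1 ⋯ v_n v_0`
(`n ≥ 5`) whose tip `v_0 = t` is a non-branching vertex of `C`, meeting the decomposition
only in `t`, with `v_1 ⋯ v_n` induced in `G` and no vertex of `{v_2, v_3, v_4}` having a
neighbor in the decomposition. -/
def IsAppendage (G : SimpleGraph V) {v0 : V} (c : G.Walk v0 v0) (d : EarData G)
    {t : V} (F : G.Walk t t) : Prop :=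
  F.IsCycle ∧ 6 ≤ F.length ∧ t ∈ c.support ∧
  ((d.whole c).neighborSet t).ncard ≠ 3 ∧
  (∀ x ∈ F.support, x ∈ (d.whole c).verts → x = t) ∧
  (∀ x ∈ F.support, x ≠ t → ∀ y ∈ F.support, y ≠ t → G.Adj x y → F.toSubgraph.Adj x y) ∧
  (∀ j ∈ ({2, 3, 4} : Set ℕ), ∀ y ∈ (d.whole c).verts, ¬ G.Adj (F.getVert j) y)

/-- `S^r_v`: the set of vertices at distance at most `r` from `v ∈ V(C)` in the graph
`G − (D ∪ (V(C) ∖ {v}))`, where `D` is the set of almost `C`-dominating vertices. -/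
def Sball (G : SimpleGraph V) {v0 : V} (c : G.Walk v0 v0) (r : ℕ) (v : V) : Set V :=
  {x | ∃ p : (G.del ({u | AlmostDom G c u} ∪ ({y | y ∈ c.support} \ {v}))).Walk v x,
        p.length ≤ r}

/-- `S^r_X = ⋃_{v ∈ X} S^r_v`. -/
def SsetOf (G : SimpleGraph V) {v0 : V} (c : G.Walk v0 v0) (r : ℕ) (X : Set V) : Set V :=
  ⋃ v ∈ X, Sball G c r v


/-- Walk along a chain of adjacent vertices. -/
def chainW (G : SimpleGraph V) (f : ℕ → V) (hf : ∀ j, G.Adj (f j) (f (j + 1))) (i : ℕ) :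
    (d : ℕ) → G.Walk (f i) (f (i + d))
  | 0 => Walk.nil
  | d + 1 => ((chainW G f hf i d).concat (hf (i + d)))

lemma chainW_length (G : SimpleGraph V) (f : ℕ → V) (hf : ∀ j, G.Adj (f j) (f (j + 1)))
    (i d : ℕ) : (chainW G f hf i d).length = d := by
  induction d with
  | zero => rfl
  | succ d ih => simp [chainW, Walk.length_concat, ih]

lemma chainW_getVert (G : SimpleGraph V) (f : ℕ → V) (hf : ∀ j, G.Adj (f j) (f (j + 1)))
    (i d t : ℕ) (ht : t ≤ d) : (chainW G f hf i d).getVert t = f (i + t) := by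
  induction d with
  | zero => interval_cases t; rfl
  | succ d ih =>
    rw [chainW, Walk.concat_eq_append, Walk.getVert_append]
    rcases lt_or_ge t ((chainW G f hf i d).length) with h | h
    · rw [if_pos h, ih (by rw [chainW_length] at h; omega)]
    · rw [if_neg (not_lt.mpr h)]
      rw [chainW_length] at h
      have h0 : t - (chainW G f hf i d).length = t - d := by rw [chainW_length]
      rw [h0]
      rcases (by omega : t = d ∨ t = d + 1) with h1 | h1
      · rw [h1, Nat.sub_self]
        rfl
      · rw [h1]
        have h2 : d + 1 - d = 1 := by omega
        rw [h2]
        rfl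

lemma chainW_support (G : SimpleGraph V) (f : ℕ → V) (hf : ∀ j, G.Adj (f j) (f (j + 1)))
    (i d : ℕ) : (chainW G f hf i d).support = (List.range (d + 1)).map (fun t => f (i + t)) := by
  induction d with
  | zero => rfl
  | succ d ih =>
    rw [chainW, Walk.support_concat, ih]
    simp [List.range_succ]

lemma walk_support_eq_map {G : SimpleGraph V} {u v : V} (p : G.Walk u v) :
    p.support = (List.range (p.length + 1)).map p.getVert := by
  induction p with
  | nil => rfl
  | cons h q ih =>
    rw [Walk.support_cons, Walk.length_cons, List.range_succ_eq_map, List.map_cons,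
      List.map_map]
    have h1 : (Walk.cons h q).getVert 0 = _ := Walk.getVert_zero _
    have h2 : (Walk.cons h q).getVert ∘ Nat.succ = q.getVert := funext fun t => rfl
    rw [h1, h2, ← ih]

lemma cycle_getVert_inj {G : SimpleGraph V} {u : V} {c : G.Walk u u} (hc : c.IsCycle) :
    ∀ s t, s < c.length → t < c.length → c.getVert s = c.getVert t → s = t := by
  have hnd : c.support.tail.Nodup := hc.2
  have hsupp := walk_support_eq_map c
  rw [List.range_succ_eq_map, List.map_cons, List.map_map] at hsupp
  have htail : c.support.tail = (List.range c.length).map (c.getVert ∘ Nat.succ) := by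
    rw [hsupp]
    rfl
  rw [htail] at hnd
  have key : ∀ a b, a < c.length → b < c.length →
      c.getVert (a + 1) = c.getVert (b + 1) → a = b := by
    intro a b ha hb hab
    exact List.inj_on_of_nodup_map hnd (List.mem_range.mpr ha) (List.mem_range.mpr hb) hab
  have hlen : 3 ≤ c.length := hc.three_le_length
  intro s t hs ht hst
  rcases Nat.eq_zero_or_pos s with rfl | hs0
  · rcases Nat.eq_zero_or_pos t with rfl | ht0
    · rfl
    · exfalso
      have h1 : c.getVert ((t - 1) + 1) = c.getVert ((c.length - 1) + 1) := by
        have e1 : (t - 1) + 1 = t := by omega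
        have e2 : (c.length - 1) + 1 = c.length := by omega
        rw [e1, e2, Walk.getVert_length, ← hst]
        exact c.getVert_zero
      have := key _ _ (by omega) (by omega) h1
      omega
  · rcases Nat.eq_zero_or_pos t with rfl | ht0
    · exfalso
      have h1 : c.getVert ((s - 1) + 1) = c.getVert ((c.length - 1) + 1) := by
        have e1 : (s - 1) + 1 = s := by omega
        have e2 : (c.length - 1) + 1 = c.length := by omega
        rw [e1, e2, Walk.getVert_length, hst]
        exact c.getVert_zero
      have := key _ _ (by omega) (by omega) h1
      omega
    · have h1 : c.getVert ((s - 1) + 1) = c.getVert ((t - 1) + 1) := by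
        have e1 : (s - 1) + 1 = s := by omega
        have e2 : (t - 1) + 1 = t := by omega
        rw [e1, e2, hst]
      have := key _ _ (by omega) (by omega) h1
      omega

/-- The cyclic indexing of the vertices of a closed walk. -/
def cycF {G : SimpleGraph V} {v0 : V} (c : G.Walk v0 v0) (i : ℕ) : V :=
  c.getVert (i % c.length)

section CycleCtx

variable {G : SimpleGraph V} {v0 : V} {c : G.Walk v0 v0}

lemma cycF_congr (hij : i % c.length = j % c.length) : cycF c i = cycF c j := by
  unfold cycF
  rw [hij]

lemma getVert_eq_cycF (hn : 0 < c.length) {j : ℕ} (hj : j ≤ c.length) :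
    c.getVert j = cycF c j := by
  rcases Nat.lt_or_ge j c.length with h | h
  · unfold cycF
    rw [Nat.mod_eq_of_lt h]
  · have hjn : j = c.length := by omega
    subst hjn
    unfold cycF
    rw [Nat.mod_self, Walk.getVert_zero, Walk.getVert_length]

lemma cycF_eq_iff (hc : c.IsCycle) {i j : ℕ} :
    cycF c i = cycF c j ↔ i % c.length = j % c.length := by
  constructor
  · intro h
    have hn : 0 < c.length := by have := hc.three_le_length; omega
    exact cycle_getVert_inj hc _ _ (Nat.mod_lt _ hn) (Nat.mod_lt _ hn) h
  · exact cycF_congr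

lemma cycF_adjC (hn : 0 < c.length) (i : ℕ) :
    c.toSubgraph.Adj (cycF c i) (cycF c (i + 1)) := by
  rw [Walk.toSubgraph_adj_iff]
  refine ⟨i % c.length, ?_, Nat.mod_lt _ hn⟩
  have h1 : c.getVert (i % c.length) = cycF c i := rfl
  have h2 : c.getVert (i % c.length + 1) = cycF c (i + 1) := by
    rw [getVert_eq_cycF hn (by have := Nat.mod_lt i hn; omega)]
    exact cycF_congr ((Nat.mod_modEq i c.length).add_right 1)
  rw [h1, h2]

lemma cycF_adj (hn : 0 < c.length) (i : ℕ) : G.Adj (cycF c i) (cycF c (i + 1)) :=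
  (cycF_adjC hn i).adj_sub

lemma adjC_iff (hc : c.IsCycle) {s t : ℕ} :
    c.toSubgraph.Adj (cycF c s) (cycF c t) ↔
      ((s + 1) % c.length = t % c.length ∨ (t + 1) % c.length = s % c.length) := by
  have hn : 0 < c.length := by have := hc.three_le_length; omega
  constructor
  · intro h
    rw [Walk.toSubgraph_adj_iff] at h
    obtain ⟨i, hi, hilt⟩ := h
    rw [getVert_eq_cycF hn (le_of_lt hilt), getVert_eq_cycF hn (by omega)] at hi
    rw [Sym2.eq_iff] at hi
    rcases hi with ⟨h1, h2⟩ | ⟨h1, h2⟩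
    · left
      rw [cycF_eq_iff hc] at h1 h2
      calc (s + 1) % c.length = (i + 1) % c.length := by
            rw [Nat.add_mod, ← h1, ← Nat.add_mod]
        _ = t % c.length := h2
    · right
      rw [cycF_eq_iff hc] at h1 h2
      calc (t + 1) % c.length = (i + 1) % c.length := by
            rw [Nat.add_mod, ← h1, ← Nat.add_mod]
        _ = s % c.length := h2
  · intro h
    rcases h with h | h
    · have := cycF_adjC (c := c) hn s
      rwa [cycF_congr (show (s+1) % c.length = t % c.length from h)] at this
    · have := cycF_adjC (c := c) hn t
      rw [cycF_congr (show (t+1) % c.length = s % c.length from h)] at this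
      exact this.symm

lemma mem_support_iff_cycF (hn : 0 < c.length) {x : V} :
    x ∈ c.support ↔ ∃ r, r < c.length ∧ cycF c r = x := by
  rw [Walk.mem_support_iff_exists_getVert]
  constructor
  · rintro ⟨r, hr, hrn⟩
    rcases Nat.lt_or_ge r c.length with h | h
    · exact ⟨r, h, by rw [← getVert_eq_cycF hn (le_of_lt h), hr]⟩
    · have : r = c.length := by omega
      subst this
      exact ⟨0, hn, by rw [← hr]; unfold cycF; rw [Nat.zero_mod, Walk.getVert_zero,
        Walk.getVert_length]⟩
  · rintro ⟨r, hr, hrx⟩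
    exact ⟨r, by rw [getVert_eq_cycF hn (le_of_lt hr)]; exact hrx, le_of_lt hr⟩

end CycleCtx

lemma dvd_of_modeq_add {n a k : ℕ} (h : (a + k) % n = a % n) : n ∣ k := by
  have h2 : a ≡ a + k [MOD n] := Nat.ModEq.symm h
  have := (Nat.modEq_iff_dvd' (Nat.le_add_right a k)).mp h2
  simpa using this

section CycleCtx2

variable {G : SimpleGraph V} {v0 : V} {c : G.Walk v0 v0}

lemma cycF_ne (hc : c.IsCycle) {a k : ℕ} (hk : 0 < k) (hk2 : k < c.length) :
    cycF c (a + k) ≠ cycF c a := by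
  intro h
  rw [cycF_eq_iff hc] at h
  have := dvd_of_modeq_add h
  have := Nat.le_of_dvd hk this
  omega

lemma dist_cycF_one (hc : c.IsCycle) (hn : 6 ≤ c.length) (a : ℕ) :
    (c.toSubgraph.spanningCoe).dist (cycF c a) (cycF c (a + 1)) = 1 := by
  have hn0 : 0 < c.length := by omega
  have hadj : (c.toSubgraph.spanningCoe).Adj (cycF c a) (cycF c (a + 1)) := cycF_adjC hn0 a
  refine le_antisymm (le_trans (SimpleGraph.dist_le hadj.toWalk) (by simp)) ?_
  have h0 : (c.toSubgraph.spanningCoe).dist (cycF c a) (cycF c (a + 1)) ≠ 0 := by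
    rw [Ne, SimpleGraph.dist_eq_zero_iff_eq_or_not_reachable]
    push_neg
    exact ⟨(cycF_ne hc one_pos (by omega)).symm, hadj.reachable⟩
  omega

lemma dist_cycF_three (hc : c.IsCycle) (hn : 6 ≤ c.length) (a : ℕ) :
    (c.toSubgraph.spanningCoe).dist (cycF c a) (cycF c (a + 3)) = 3 := by
  have hn0 : 0 < c.length := by omega
  set D := c.toSubgraph.spanningCoe with hD
  have hadj : ∀ j : ℕ, D.Adj (cycF c j) (cycF c (j + 1)) := fun j => cycF_adjC hn0 j
  have hw : D.dist (cycF c a) (cycF c (a + 3)) ≤ 3 := by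
    refine le_trans (SimpleGraph.dist_le
      (Walk.cons (hadj a) (Walk.cons (hadj (a + 1)) (Walk.cons (hadj (a + 2)) Walk.nil)))) ?_
    simp
  -- adjacency in D between cycF vertices is characterized by adjC_iff
  have hDadj : ∀ s t : ℕ, D.Adj (cycF c s) (cycF c t) →
      ((s + 1) % c.length = t % c.length ∨ (t + 1) % c.length = s % c.length) := by
    intro s t h
    exact (adjC_iff hc).mp h
  have hne : D.dist (cycF c a) (cycF c (a + 3)) ≠ 0 := by
    rw [Ne, SimpleGraph.dist_eq_zero_iff_eq_or_not_reachable]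
    push_neg
    constructor
    · exact (cycF_ne hc (by omega) (by omega)).symm
    · exact SimpleGraph.Walk.reachable
        (Walk.cons (hadj a) (Walk.cons (hadj (a + 1)) (Walk.cons (hadj (a + 2)) Walk.nil)))
  have hne1 : D.dist (cycF c a) (cycF c (a + 3)) ≠ 1 := by
    intro h1
    obtain ⟨w, hwlen⟩ := SimpleGraph.exists_walk_of_dist_ne_zero hne
    rw [h1] at hwlen
    have : D.Adj (cycF c a) (cycF c (a + 3)) := by
      have h01 := w.adj_getVert_succ (by omega : 0 < w.length)
      rw [Walk.getVert_zero] at h01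
      have : w.getVert 1 = cycF c (a + 3) := by
        have := w.getVert_length
        rw [hwlen] at this
        exact this
      rwa [this] at h01
    rcases hDadj _ _ this with h | h
    · have : (a + 1 + 2) % c.length = (a + 1) % c.length := by
        have e : a + 3 = a + 1 + 2 := by omega
        rw [e] at h
        exact h.symm
      have := Nat.le_of_dvd (by omega) (dvd_of_modeq_add this)
      omega
    · have : (a + 4) % c.length = a % c.length := by
        have e : a + 3 + 1 = a + 4 := by omega
        rwa [e] at h
      have := Nat.le_of_dvd (by omega) (dvd_of_modeq_add this)
      omega
  have hne2 : D.dist (cycF c a) (cycF c (a + 3)) ≠ 2 := by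
    intro h2
    obtain ⟨w, hwlen⟩ := SimpleGraph.exists_walk_of_dist_ne_zero hne
    rw [h2] at hwlen
    have h01 := w.adj_getVert_succ (by omega : 0 < w.length)
    have h12 := w.adj_getVert_succ (by omega : 1 < w.length)
    rw [Walk.getVert_zero] at h01
    have hend : w.getVert 2 = cycF c (a + 3) := by
      have := w.getVert_length
      rwa [hwlen] at this
    rw [hend] at h12
    -- the middle vertex is on the cycle
    have hmem : w.getVert 1 ∈ c.toSubgraph.verts := h01.snd_mem
    rw [Walk.mem_verts_toSubgraph, mem_support_iff_cycF hn0] at hmem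
    obtain ⟨r, hr, hrv⟩ := hmem
    rw [← hrv] at h01 h12
    rcases hDadj _ _ h01 with ha | ha <;> rcases hDadj _ _ h12 with hb | hb
    · -- a+1 ≡ r, r+1 ≡ a+3 : then a+2 ≡ a+3, n ∣ 1
      have e1 : (a + 2) % c.length = (r + 1) % c.length :=
        (Nat.ModEq.add_right 1 (show Nat.ModEq c.length (a+1) r from ha))
      have e2 : (a + 2 + 1) % c.length = (a + 2) % c.length := by
        have : (a + 2) % c.length = (a + 3) % c.length := e1.trans hb
        have e : a + 3 = a + 2 + 1 := by omega
        rw [e] at this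
        exact this.symm
      have := Nat.le_of_dvd (by omega) (dvd_of_modeq_add e2)
      omega
    · -- a+1 ≡ r, a+4 ≡ r : n ∣ 3
      have e1 : (a + 1 + 3) % c.length = (a + 1) % c.length := by
        have : (a + 4) % c.length = (a + 1) % c.length :=
          (show Nat.ModEq c.length (a+3+1) r from hb).trans
            (show Nat.ModEq c.length r (a+1) from (Nat.ModEq.symm ha))
        have e : a + 4 = a + 1 + 3 := by omega
        rwa [e] at this
      have := Nat.le_of_dvd (by omega) (dvd_of_modeq_add e1)
      omega
    · -- r+1 ≡ a, r+1 ≡ a+3 : n ∣ 3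
      have e1 : (a + 3) % c.length = a % c.length :=
        (show Nat.ModEq c.length (r+1) (a+3) from hb).symm.trans
          (show Nat.ModEq c.length (r+1) a from ha)
      have := Nat.le_of_dvd (by omega) (dvd_of_modeq_add e1)
      omega
    · -- r+1 ≡ a, a+4 ≡ r : a+5 ≡ a, n ∣ 5
      have e1 : (a + 5) % c.length = a % c.length :=
        ((Nat.ModEq.add_right 1 (show Nat.ModEq c.length (a+4) r from hb)).trans
          (show Nat.ModEq c.length (r+1) a from ha))
      have := Nat.le_of_dvd (by omega) (dvd_of_modeq_add e1)
      omega
  omega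

end CycleCtx2

section CycleCtx3

variable {G : SimpleGraph V} {v0 : V} {c : G.Walk v0 v0}

lemma cycF_mem_support (hn0 : 0 < c.length) (x : ℕ) : cycF c x ∈ c.support :=
  (mem_support_iff_cycF hn0).mpr ⟨x % c.length, Nat.mod_lt _ hn0,
    cycF_congr (Nat.mod_mod_of_dvd x (dvd_refl _))⟩

lemma cycF_add_inj (hc : c.IsCycle) {i a b : ℕ} (ha : a < c.length) (hb : b < c.length)
    (h : cycF c (i + a) = cycF c (i + b)) : a = b := by
  rw [cycF_eq_iff hc] at h
  rcases le_or_gt a b with hab | hab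
  · have h2 : (i + a + (b - a)) % c.length = (i + a) % c.length := by
      rw [show i + a + (b - a) = i + b by omega]
      exact h.symm
    rcases Nat.eq_zero_or_pos (b - a) with h0 | h0
    · omega
    · have := Nat.le_of_dvd h0 (dvd_of_modeq_add h2)
      omega
  · have h2 : (i + b + (a - b)) % c.length = (i + b) % c.length := by
      rw [show i + b + (a - b) = i + a by omega]
      exact h
    have := Nat.le_of_dvd (by omega) (dvd_of_modeq_add h2)
    omega

end CycleCtx3

/-- A "lollipop" closed walk: `v`, then a chain along `f`, then back to `v`. -/
def lollipop (G : SimpleGraph V) (f : ℕ → V) (hf : ∀ j, G.Adj (f j) (f (j + 1))) {v : V}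
    (i d : ℕ) (hA : G.Adj v (f i)) (hB : G.Adj v (f (i + d))) : G.Walk v v :=
  Walk.cons hA ((chainW G f hf i d).concat hB.symm)

section Lollipop

variable {G : SimpleGraph V} {f : ℕ → V} {hf : ∀ j, G.Adj (f j) (f (j + 1))} {v : V}
  {i d : ℕ} {hA : G.Adj v (f i)} {hB : G.Adj v (f (i + d))}

lemma lollipop_length : (lollipop G f hf i d hA hB).length = d + 2 := by
  unfold lollipop
  rw [Walk.length_cons, Walk.length_concat, chainW_length]

lemma lollipop_getVert_zero : (lollipop G f hf i d hA hB).getVert 0 = v := rfl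

lemma lollipop_getVert_succ {t : ℕ} (ht : t ≤ d) :
    (lollipop G f hf i d hA hB).getVert (t + 1) = f (i + t) := by
  unfold lollipop
  rw [Walk.getVert_cons_succ, Walk.concat_eq_append, Walk.getVert_append]
  rcases lt_or_ge t (chainW G f hf i d).length with h | h
  · rw [if_pos h, chainW_getVert]
    rw [chainW_length] at h
    omega
  · rw [chainW_length] at h
    have htd : t = d := by omega
    subst htd
    rw [if_neg (by rw [chainW_length]; omega), chainW_length, Nat.sub_self]
    rfl

lemma lollipop_getVert_last : (lollipop G f hf i d hA hB).getVert (d + 2) = v := by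
  unfold lollipop
  rw [Walk.getVert_cons_succ, Walk.concat_eq_append, Walk.getVert_append,
    if_neg (by rw [chainW_length]; omega), chainW_length, show d + 1 - d = 1 by omega]
  rfl

lemma lollipop_support :
    (lollipop G f hf i d hA hB).support =
      v :: ((List.range (d + 1)).map (fun t => f (i + t)) ++ [v]) := by
  unfold lollipop
  rw [Walk.support_cons, Walk.support_concat, chainW_support]

lemma lollipop_isCycle (hinj : ∀ a b, a ≤ d → b ≤ d → f (i + a) = f (i + b) → a = b)
    (hvf : ∀ t, t ≤ d → v ≠ f (i + t)) (hd : 0 < d) :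
    (lollipop G f hf i d hA hB).IsCycle := by
  unfold lollipop
  rw [Walk.cons_isCycle_iff]
  constructor
  · rw [Walk.isPath_def, Walk.support_concat, chainW_support,
      List.nodup_append]
    refine ⟨?_, List.nodup_singleton v, ?_⟩
    · refine List.Nodup.map_on ?_ List.nodup_range
      intro a ha b hb hab
      exact hinj a b (by simpa using Nat.lt_succ_iff.mp (List.mem_range.mp ha))
        (by simpa using Nat.lt_succ_iff.mp (List.mem_range.mp hb)) hab
    · intro x hx y hy
      rw [List.mem_map] at hx
      obtain ⟨t, ht, rfl⟩ := hx
      rw [List.mem_singleton] at hy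
      subst hy
      exact fun hy => hvf t (Nat.lt_succ_iff.mp (List.mem_range.mp ht)) hy.symm
  · rw [Walk.edges_concat]
    intro hm
    rw [List.concat_eq_append, List.mem_append, List.mem_singleton] at hm
    rcases hm with hm | hm
    · have : v ∈ (chainW G f hf i d).support :=
        Walk.fst_mem_support_of_mem_edges _ hm
      rw [chainW_support, List.mem_map] at this
      obtain ⟨t, ht, htv⟩ := this
      exact hvf t (Nat.lt_succ_iff.mp (List.mem_range.mp ht)) htv.symm
    · rw [Sym2.eq_iff] at hm
      rcases hm with ⟨h1, h2⟩ | ⟨h1, h2⟩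
      · exact hvf d le_rfl h1
      · exact absurd (hinj 0 d (by omega) le_rfl h2) (by omega)

lemma lollipop_adj_start :
    (lollipop G f hf i d hA hB).toSubgraph.Adj v (f i) := by
  have h := Walk.toSubgraph_adj_getVert (lollipop G f hf i d hA hB)
    (by rw [lollipop_length]; omega : 0 < (lollipop G f hf i d hA hB).length)
  rwa [lollipop_getVert_zero, show (0 : ℕ) + 1 = 0 + 1 from rfl,
    lollipop_getVert_succ (Nat.zero_le d)] at h

lemma lollipop_adj_end :
    (lollipop G f hf i d hA hB).toSubgraph.Adj (f (i + d)) v := by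
  have h := Walk.toSubgraph_adj_getVert (lollipop G f hf i d hA hB)
    (by rw [lollipop_length]; omega : d + 1 < (lollipop G f hf i d hA hB).length)
  rwa [lollipop_getVert_succ le_rfl, show d + 1 + 1 = d + 2 from rfl,
    lollipop_getVert_last] at h

lemma lollipop_adj_mid {t : ℕ} (ht : t < d) :
    (lollipop G f hf i d hA hB).toSubgraph.Adj (f (i + t)) (f (i + t + 1)) := by
  have h := Walk.toSubgraph_adj_getVert (lollipop G f hf i d hA hB)
    (by rw [lollipop_length]; omega : t + 1 < (lollipop G f hf i d hA hB).length)
  rwa [lollipop_getVert_succ (by omega : t ≤ d),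
    show t + 1 + 1 = (t + 1) + 1 from rfl,
    lollipop_getVert_succ (by omega : t + 1 ≤ d)] at h

end Lollipop

lemma exists_shift {n : ℕ} (hn0 : 0 < n) (a r : ℕ) : ∃ s, s < n ∧ (a + s) % n = r % n := by
  refine ⟨(n - a % n + r % n) % n, Nat.mod_lt _ hn0, ?_⟩
  have h1 := Nat.div_add_mod a n
  have h2 := Nat.mod_lt a hn0
  have h3 := Nat.mod_lt r hn0
  have e0 : (a + (n - a % n + r % n) % n) % n = (a + (n - a % n + r % n)) % n := by
    rw [Nat.add_mod, Nat.mod_mod_of_dvd _ (dvd_refl n), ← Nat.add_mod]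
  rw [e0]
  have e : a + (n - a % n + r % n) = r % n + (a / n + 1) * n := by
    have : (a / n + 1) * n = n * (a / n) + n := by ring
    omega
  rw [e, Nat.add_mul_mod_self_right, Nat.mod_mod_of_dvd _ (dvd_refl n)]

section BlockCase

variable {G : SimpleGraph V} {v0 : V} {c : G.Walk v0 v0}

lemma block_case (hcyc : c.IsCycle) (hn6 : 6 ≤ c.length) (v : V)
    {i₀ m : ℕ} (hm0 : 0 < m) (hmn : m ≤ c.length)
    (hNS : {x | x ∈ c.support ∧ G.Adj v x} = {x | ∃ j, j < m ∧ x = cycF c (i₀ + j)}) :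
    ({x | x ∈ c.support ∧ G.Adj v x}).ncard ≤ m ∧
      ∃ (a b : V) (p : G.Walk a b), p.IsPath ∧ p.length ≤ m - 1 ∧
        p.toSubgraph ≤ c.toSubgraph ∧
        {x | x ∈ c.support ∧ G.Adj v x} = {x | x ∈ p.support} := by
  classical
  have hn0 : 0 < c.length := by omega
  have hf : ∀ j, G.Adj (cycF c j) (cycF c (j + 1)) := fun j => cycF_adj hn0 j
  set p := chainW G (cycF c) hf i₀ (m - 1) with hp
  have hplen : p.length = m - 1 := chainW_length _ _ _ _ _
  have hpsup : p.support = (List.range m).map (fun t => cycF c (i₀ + t)) := by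
    rw [hp, chainW_support, show m - 1 + 1 = m by omega]
  have hsup_set : {x | x ∈ p.support} = {x | ∃ j, j < m ∧ x = cycF c (i₀ + j)} := by
    ext x
    simp only [Set.mem_setOf_eq, hpsup, List.mem_map, List.mem_range]
    constructor
    · rintro ⟨t, ht, rfl⟩
      exact ⟨t, ht, rfl⟩
    · rintro ⟨t, ht, rfl⟩
      exact ⟨t, ht, rfl⟩
  have hpath : p.IsPath := by
    rw [Walk.isPath_def, hpsup]
    refine List.Nodup.map_on ?_ List.nodup_range
    intro a ha b hb hab
    exact cycF_add_inj hcyc (by have := List.mem_range.mp ha; omega)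
      (by have := List.mem_range.mp hb; omega) hab
  have hple : p.toSubgraph ≤ c.toSubgraph := by
    constructor
    · intro x hx
      rw [Walk.mem_verts_toSubgraph, hpsup, List.mem_map] at hx
      obtain ⟨t, _, rfl⟩ := hx
      rw [Walk.mem_verts_toSubgraph]
      exact cycF_mem_support hn0 _
    · intro x y hxy
      rw [Walk.toSubgraph_adj_iff] at hxy
      obtain ⟨t, ht, htlt⟩ := hxy
      rw [hplen] at htlt
      rw [hp, chainW_getVert _ _ _ _ _ _ (by omega), chainW_getVert _ _ _ _ _ _ (by omega)]
        at ht
      have hadj := cycF_adjC (c := c) hn0 (i₀ + t)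
      rw [Sym2.eq_iff] at ht
      rcases ht with ⟨h1, h2⟩ | ⟨h1, h2⟩
      · rw [← h1, ← h2]
        exact hadj
      · rw [← h1, ← h2]
        exact hadj.symm
  refine ⟨?_, cycF c i₀, cycF c (i₀ + (m - 1)), p, hpath, by omega, hple, by
    rw [hNS, hsup_set]⟩
  have hset : {x | x ∈ c.support ∧ G.Adj v x} = ↑p.support.toFinset := by
    rw [hNS, ← hsup_set]
    ext x
    simp
  rw [hset, Set.ncard_coe_finset]
  calc p.support.toFinset.card ≤ p.support.length := List.toFinset_card_le _
    _ = m := by rw [Walk.length_support, hplen]; omega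

lemma gap_false {G : SimpleGraph V} (h4 : C4Free G) {v0 : V} {c : G.Walk v0 v0}
    (hc : IsLongHoleW G c)
    (hshort : ∀ (u : V) (w : G.Walk u u), IsLongHoleW G w → c.length ≤ w.length)
    {v : V} (hv : v ∉ c.support) {i d : ℕ} (hd : d = 2 ∨ 4 ≤ d) (hd3 : d + 3 ≤ c.length)
    (hA : G.Adj v (cycF c i)) (hB : G.Adj v (cycF c (i + d)))
    (hmid : ∀ t, 0 < t → t < d → ¬ G.Adj v (cycF c (i + t))) : False := by
  obtain ⟨hcyc, hn6, hchord⟩ := hc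
  have hn0 : 0 < c.length := by omega
  have hd2 : 2 ≤ d := by omega
  have hf : ∀ j, G.Adj (cycF c j) (cycF c (j + 1)) := fun j => cycF_adj hn0 j
  have hvf : ∀ t, v ≠ cycF c (i + t) := fun t h => hv (h ▸ cycF_mem_support hn0 (i + t))
  have hinj : ∀ a b, a ≤ d → b ≤ d → cycF c (i + a) = cycF c (i + b) → a = b :=
    fun a b ha hb h => cycF_add_inj hcyc (by omega) (by omega) h
  set Q := lollipop G (cycF c) hf i d hA hB with hQ
  have hQcyc : Q.IsCycle := lollipop_isCycle hinj (fun t _ => hvf t) (by omega)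
  have hQlen : Q.length = d + 2 := lollipop_length
  have hQsup : ∀ x ∈ Q.support, x = v ∨ ∃ t, t ≤ d ∧ x = cycF c (i + t) := by
    intro x hx
    rw [hQ, lollipop_support] at hx
    rcases List.mem_cons.mp hx with rfl | hx
    · exact Or.inl rfl
    · rcases List.mem_append.mp hx with hx | hx
      · rw [List.mem_map] at hx
        obtain ⟨t, ht, rfl⟩ := hx
        exact Or.inr ⟨t, Nat.lt_succ_iff.mp (List.mem_range.mp ht), rfl⟩
      · exact Or.inl (List.mem_singleton.mp hx)
  have hind : ∀ x ∈ Q.support, ∀ y ∈ Q.support, G.Adj x y → Q.toSubgraph.Adj x y := by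
    intro x hx y hy hxy
    rcases hQsup x hx with rfl | ⟨s, hs, rfl⟩ <;> rcases hQsup y hy with h' | ⟨t, ht, rfl⟩
    · exact absurd rfl (h' ▸ hxy).ne
    · rcases Nat.eq_zero_or_pos t with rfl | ht0
      · exact lollipop_adj_start
      · rcases Nat.lt_or_ge t d with htd | htd
        · exact absurd hxy (hmid t ht0 htd)
        · have hte : t = d := by omega
          subst hte
          exact lollipop_adj_end.symm
    · subst h'
      rcases Nat.eq_zero_or_pos s with rfl | hs0
      · exact lollipop_adj_start.symm
      · rcases Nat.lt_or_ge s d with hsd | hsd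
        · exact absurd hxy.symm (hmid s hs0 hsd)
        · have hse : s = d := by omega
          subst hse
          exact lollipop_adj_end
    · have hcadj : c.toSubgraph.Adj (cycF c (i + s)) (cycF c (i + t)) :=
        hchord _ (cycF_mem_support hn0 _) _ (cycF_mem_support hn0 _) hxy
      rcases (adjC_iff hcyc).mp hcadj with h | h
      · have heq : cycF c (i + (s + 1)) = cycF c (i + t) :=
          cycF_congr (by rw [show i + (s + 1) = i + s + 1 by omega]; exact h)
        have hst : s + 1 = t := cycF_add_inj hcyc (by omega) (by omega) heq
        subst hst
        exact lollipop_adj_mid (by omega)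
      · have heq : cycF c (i + (t + 1)) = cycF c (i + s) :=
          cycF_congr (by rw [show i + (t + 1) = i + t + 1 by omega]; exact h)
        have hts : t + 1 = s := cycF_add_inj hcyc (by omega) (by omega) heq
        subst hts
        exact (lollipop_adj_mid (by omega)).symm
  rcases hd with rfl | hd4
  · exact h4 ⟨v, Q, hQcyc, by rw [hQlen], hind⟩
  · have hlong : IsLongHoleW G Q := ⟨hQcyc, by rw [hQlen]; omega, hind⟩
    have := hshort v Q hlong
    rw [hQlen] at this
    omega

theorem statement_4
    [Fintype V] (G : SimpleGraph V) (k : ℕ) (hk : 1 ≤ k) (h4 : C4Free G)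
    (v0 : V) (c : G.Walk v0 v0) (hc : IsLongHoleW G c)
    (hshort : ∀ (u : V) (w : G.Walk u u), IsLongHoleW G w → c.length ≤ w.length)
    (hbig : muK k < (c.length : ℝ))
    (hnone : NoLongHole (G.del {x | x ∈ c.support}))
    (v : V) (hv : v ∉ c.support) :
    AlmostDom G c v ∨
      (({x | x ∈ c.support ∧ G.Adj v x}).ncard ≤ 3 ∧
        ({x | x ∈ c.support ∧ G.Adj v x} = ∅ ∨
          ∃ (a b : V) (p : G.Walk a b), p.IsPath ∧ p.length ≤ 2 ∧
            p.toSubgraph ≤ c.toSubgraph ∧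
            {x | x ∈ c.support ∧ G.Adj v x} = {x | x ∈ p.support})) := by
  classical
  obtain ⟨hcyc, hn6, hchord⟩ := hc
  have hn0 : 0 < c.length := by omega
  clear hbig hnone hk
  have hgap13 : ∀ b q, 0 < q → q + 3 ≤ c.length → G.Adj v (cycF c b) →
      G.Adj v (cycF c (b + q)) → (∀ t, 0 < t → t < q → ¬ G.Adj v (cycF c (b + t))) →
      q = 1 ∨ q = 3 := by
    intro b q hq0 hq3 hb hbq hm
    by_contra hcon
    push_neg at hcon
    exact gap_false h4 ⟨hcyc, hn6, hchord⟩ hshort hv (by omega) hq3 hb hbq hm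
  by_cases hex : ∃ r, G.Adj v (cycF c r)
  case neg =>
    right
    have hempty : {x | x ∈ c.support ∧ G.Adj v x} = ∅ := by
      ext x
      simp only [Set.mem_setOf_eq, Set.mem_empty_iff_false, iff_false, not_and]
      intro hxs hxa
      obtain ⟨r, hr, rfl⟩ := (mem_support_iff_cycF hn0).mp hxs
      exact hex ⟨r, hxa⟩
    rw [hempty]
    exact ⟨by simp, Or.inl rfl⟩
  obtain ⟨a, hPa⟩ := hex
  have hPn : ∀ s t, s % c.length = t % c.length → G.Adj v (cycF c s) →
      G.Adj v (cycF c t) := by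
    intro s t h hs
    rwa [cycF_congr h] at hs
  have hgex : ∀ b : ℕ, ∃ t, 0 < t ∧ G.Adj v (cycF c (b + t)) := by
    intro b
    obtain ⟨s, hs, hmod⟩ := exists_shift hn0 b a
    rcases Nat.eq_zero_or_pos s with rfl | hs0
    · refine ⟨c.length, hn0, ?_⟩
      refine hPn a (b + c.length) ?_ hPa
      rw [Nat.add_mod_right]
      exact hmod.symm
    · exact ⟨s, hs0, hPn a (b + s) hmod.symm hPa⟩
  set gap : ℕ → ℕ := fun b => Nat.find (hgex b) with hgap
  have hgap_pos : ∀ b, 0 < gap b := fun b => (Nat.find_spec (hgex b)).1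
  have hgap_adj : ∀ b, G.Adj v (cycF c (b + gap b)) := fun b => (Nat.find_spec (hgex b)).2
  have hgap_min : ∀ b t, 0 < t → t < gap b → ¬ G.Adj v (cycF c (b + t)) := by
    intro b t ht0 htg hadj
    exact Nat.find_min (hgex b) htg ⟨ht0, hadj⟩
  have hgap_le : ∀ b, G.Adj v (cycF c b) → gap b ≤ c.length := by
    intro b hb
    apply Nat.find_le
    exact ⟨hn0, hPn b (b + c.length) (Nat.add_mod_right b _).symm hb⟩
  have hgap_13 : ∀ b, G.Adj v (cycF c b) → gap b + 3 ≤ c.length → gap b = 1 ∨ gap b = 3 :=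
    fun b hb h3 => hgap13 b (gap b) (hgap_pos b) h3 hb (hgap_adj b) (hgap_min b)
  by_cases hbig2 : ∃ b, G.Adj v (cycF c b) ∧ c.length - 2 ≤ gap b
  · -- big gap: neighbours form a short block of consecutive vertices
    right
    obtain ⟨b, hPb, hbq⟩ := hbig2
    have hq_le : gap b ≤ c.length := hgap_le b hPb
    have hchar : ∀ s, G.Adj v (cycF c (b + s)) → s = 0 ∨ gap b ≤ s := by
      intro s hadj
      by_contra hcon
      push_neg at hcon
      exact hgap_min b s (by omega) (by omega) hadj
    have hmidP : gap b = c.length - 2 → G.Adj v (cycF c (b + gap b + 1)) := by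
      intro hq
      by_contra hnot
      have h1 : G.Adj v (cycF c (b + gap b)) := hgap_adj b
      have h2 : G.Adj v (cycF c (b + gap b + 2)) := by
        refine hPn b (b + gap b + 2) ?_ hPb
        rw [show b + gap b + 2 = b + c.length by omega, Nat.add_mod_right]
      have h3 := hgap13 (b + gap b) 2 (by omega) (by omega) h1 h2 ?_
      · omega
      · intro t ht0 ht2
        have ht1 : t = 1 := by omega
        subst ht1
        exact hnot
    set m := c.length - gap b + 1 with hm
    have hNS : {x | x ∈ c.support ∧ G.Adj v x} =
        {x | ∃ j, j < m ∧ x = cycF c (b + gap b + j)} := by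
      ext x
      simp only [Set.mem_setOf_eq]
      constructor
      · rintro ⟨hxs, hxa⟩
        obtain ⟨r, hr, rfl⟩ := (mem_support_iff_cycF hn0).mp hxs
        obtain ⟨s, hsn, hsm⟩ := exists_shift hn0 b r
        have hPs : G.Adj v (cycF c (b + s)) := hPn r (b + s) hsm.symm hxa
        rcases hchar s hPs with rfl | hqs
        · refine ⟨m - 1, by omega, ?_⟩
          have e1 : cycF c r = cycF c (b + 0) := (cycF_congr hsm).symm
          have e2 : cycF c (b + gap b + (m - 1)) = cycF c (b + 0) := by
            refine cycF_congr ?_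
            rw [show b + gap b + (m - 1) = b + 0 + c.length by omega, Nat.add_mod_right]
          rw [e1, e2]
        · refine ⟨s - gap b, by omega, ?_⟩
          rw [show b + gap b + (s - gap b) = b + s by omega]
          exact (cycF_congr hsm).symm
      · rintro ⟨j, hj, rfl⟩
        refine ⟨cycF_mem_support hn0 _, ?_⟩
        rcases (by omega : j = 0 ∨ gap b + j = c.length ∨ (gap b = c.length - 2 ∧ j = 1))
          with hj0 | hjn | ⟨hq2, hj1⟩
        · subst hj0
          exact hgap_adj b
        · refine hPn b (b + gap b + j) ?_ hPb
          rw [show b + gap b + j = b + c.length by omega, Nat.add_mod_right]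
        · subst hj1
          exact hmidP hq2
    obtain ⟨h1, aa, bb, p, hp1, hp2, hp3, hp4⟩ :=
      block_case hcyc hn6 v (by omega : 0 < m) (by omega : m ≤ c.length) hNS
    exact ⟨le_trans h1 (by omega), Or.inr ⟨aa, bb, p, hp1, by omega, hp3, hp4⟩⟩
  · -- all gaps are 1 or 3: almost dominating
    left
    push_neg at hbig2
    have hg13 : ∀ b, G.Adj v (cycF c b) → gap b = 1 ∨ gap b = 3 := fun b hb =>
      hgap_13 b hb (by have := hbig2 b hb; omega)
    set S : Finset ℕ := (Finset.range c.length).filter (fun r => G.Adj v (cycF c r))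
      with hS
    have hmemS : ∀ r, r ∈ S ↔ r < c.length ∧ G.Adj v (cycF c r) := by
      intro r
      rw [hS, Finset.mem_filter, Finset.mem_range]
    set l₀ : List ℕ := S.sort (· ≤ ·) with hl₀
    have hl₀sorted : l₀.Pairwise (· < ·) := (Finset.sortedLT_sort S).pairwise
    have hl₀mem : ∀ r, r ∈ l₀ ↔ r ∈ S := fun r => Finset.mem_sort _
    have hl₀lt : ∀ r ∈ l₀, r < c.length := fun r hr => ((hmemS r).mp ((hl₀mem r).mp hr)).1
    have hl₀adj : ∀ r ∈ l₀, G.Adj v (cycF c r) := fun r hr =>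
      ((hmemS r).mp ((hl₀mem r).mp hr)).2
    have hmem1 : a % c.length ∈ S := (hmemS _).mpr ⟨Nat.mod_lt _ hn0,
      hPn a (a % c.length) (Nat.mod_mod_of_dvd a (dvd_refl _)).symm hPa⟩
    have hmem2 : (a + gap a) % c.length ∈ S := (hmemS _).mpr ⟨Nat.mod_lt _ hn0,
      hPn (a + gap a) ((a + gap a) % c.length)
        (Nat.mod_mod_of_dvd _ (dvd_refl _)).symm (hgap_adj a)⟩
    have hne12 : a % c.length ≠ (a + gap a) % c.length := by
      intro hcon
      have hcc : cycF c (a + gap a) = cycF c a := cycF_congr hcon.symm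
      have hga := hg13 a hPa
      exact cycF_ne hcyc (hgap_pos a) (by omega) hcc
    have hcard2 : 2 ≤ S.card := Finset.one_lt_card.mpr ⟨_, hmem1, _, hmem2, hne12⟩
    have hmono : ∀ (k k' : Fin l₀.length), (k : ℕ) ≤ (k' : ℕ) → l₀.get k ≤ l₀.get k' := by
      intro k k' hkk
      rcases eq_or_lt_of_le hkk with h | h
      · rw [Fin.ext h]
      · exact le_of_lt (hl₀sorted.rel_get_of_lt h)
    refine ⟨hv, l₀.map (cycF c), ?_, ?_, ?_, ?_⟩
    · refine List.Nodup.map_on ?_ (Finset.sort_nodup _ _)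
      intro r hr r' hr' hrr
      rw [cycF_eq_iff hcyc, Nat.mod_eq_of_lt (hl₀lt r hr), Nat.mod_eq_of_lt (hl₀lt r' hr')]
        at hrr
      exact hrr
    · -- at least two neighbours
      rw [List.length_map, hl₀, Finset.length_sort]
      exact hcard2
    · intro x
      constructor
      · intro hx
        rw [List.mem_map] at hx
        obtain ⟨r, hr, rfl⟩ := hx
        exact ⟨cycF_mem_support hn0 r, hl₀adj r hr⟩
      · rintro ⟨hxs, hxa⟩
        obtain ⟨r, hr, rfl⟩ := (mem_support_iff_cycF hn0).mp hxs
        rw [List.mem_map]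
        exact ⟨r, (hl₀mem r).mpr ((hmemS r).mpr ⟨hr, hxa⟩), rfl⟩
    · -- consecutive cyclic distances are 1 or 3
      intro i
      have hl₀len2 : 2 ≤ l₀.length := by
        rw [hl₀, Finset.length_sort]
        exact hcard2
      have hj : (i : ℕ) < l₀.length := lt_of_lt_of_eq i.isLt (List.length_map _)
      have hmono' : ∀ (k k' : ℕ) (hk : k < l₀.length) (hk' : k' < l₀.length), k ≤ k' →
          l₀[k] ≤ l₀[k'] := by
        intro k k' hk hk' hle
        have := hmono ⟨k, hk⟩ ⟨k', hk'⟩ hle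
        simpa [List.get_eq_getElem] using this
      have hsmono' : ∀ (k k' : ℕ) (hk : k < l₀.length) (hk' : k' < l₀.length), k < k' →
          l₀[k] < l₀[k'] := by
        intro k k' hk hk' hlt
        have := hl₀sorted.rel_get_of_lt (a := ⟨k, hk⟩) (b := ⟨k', hk'⟩) hlt
        simpa [List.get_eq_getElem] using this
      have hidx : ∀ u ∈ l₀, ∃ (k : ℕ) (hk : k < l₀.length), l₀[k] = u := by
        intro u hu
        obtain ⟨⟨k, hk⟩, h⟩ := List.mem_iff_get.mp hu
        exact ⟨k, hk, by simpa [List.get_eq_getElem] using h⟩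
      have hmem' : ∀ (k : ℕ) (hk : k < l₀.length), l₀[k] ∈ l₀ := fun k hk =>
        List.getElem_mem _
      simp only [List.get_eq_getElem, List.length_map, List.getElem_map]
      rcases Nat.lt_or_ge ((i : ℕ) + 1) l₀.length with hjlt | hjge
      · -- interior consecutive pair
        have hmod : ((i : ℕ) + 1) % l₀.length = (i : ℕ) + 1 := Nat.mod_eq_of_lt hjlt
        simp only [hmod]
        set r := l₀[(i : ℕ)]'hj with hr
        set r' := l₀[(i : ℕ) + 1]'hjlt with hr'
        have hrr' : r < r' := hsmono' _ _ hj hjlt (by omega)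
        have hPr : G.Adj v (cycF c r) := hl₀adj r (hmem' _ hj)
        have hPr' : G.Adj v (cycF c r') := hl₀adj r' (hmem' _ hjlt)
        have hr'lt : r' < c.length := hl₀lt r' (hmem' _ hjlt)
        have hnb : ∀ t, 0 < t → t < r' - r → ¬ G.Adj v (cycF c (r + t)) := by
          intro t ht0 htl hadj
          have hmem : r + t ∈ l₀ := (hl₀mem _).mpr ((hmemS _).mpr ⟨by omega, hadj⟩)
          obtain ⟨k, hk, hku⟩ := hidx _ hmem
          rcases Nat.lt_or_ge k ((i : ℕ) + 1) with hkj | hkj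
          · have := hmono' k (i : ℕ) hk hj (by omega)
            omega
          · have := hmono' ((i : ℕ) + 1) k hjlt hk (by omega)
            omega
        have hgr : gap r ≤ r' - r := Nat.find_le ⟨by omega, by
          rw [show r + (r' - r) = r' by omega]
          exact hPr'⟩
        have hgr2 : ¬ (gap r < r' - r) := fun hcon =>
          hnb (gap r) (hgap_pos r) hcon (hgap_adj r)
        have hge : cycF c r' = cycF c (r + gap r) := by
          rw [show r + gap r = r' by omega]
        rw [hge]
        unfold distW
        rcases hg13 r hPr with h1 | h1 <;> rw [h1]
        · rw [dist_cycF_one hcyc hn6]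
          simp
        · rw [dist_cycF_three hcyc hn6]
          simp
      · -- wrap-around pair
        have hj1 : (i : ℕ) + 1 = l₀.length := by omega
        have hmod : ((i : ℕ) + 1) % l₀.length = 0 := by
          rw [hj1, Nat.mod_self]
        simp only [hmod]
        have h0lt : 0 < l₀.length := by omega
        set r := l₀[(i : ℕ)]'hj with hr
        set r' := l₀[0]'h0lt with hr'
        have hrr' : r' < r := hsmono' _ _ h0lt hj (by omega)
        have hPr : G.Adj v (cycF c r) := hl₀adj r (hmem' _ hj)
        have hPr' : G.Adj v (cycF c r') := hl₀adj r' (hmem' _ h0lt)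
        have hrlt : r < c.length := hl₀lt r (hmem' _ hj)
        set q' := c.length - r + r' with hq'
        have hcong : (r + q') % c.length = r' % c.length := by
          rw [show r + q' = r' + c.length by omega, Nat.add_mod_right]
        have hPq' : G.Adj v (cycF c (r + q')) := hPn r' (r + q') hcong.symm hPr'
        have hnb : ∀ t, 0 < t → t < q' → ¬ G.Adj v (cycF c (r + t)) := by
          intro t ht0 htl hadj
          rcases Nat.lt_or_ge (r + t) c.length with hlt | hge2
          · have hmem : r + t ∈ l₀ := (hl₀mem _).mpr ((hmemS _).mpr ⟨hlt, hadj⟩)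
            obtain ⟨k, hk, hku⟩ := hidx _ hmem
            have := hmono' k (i : ℕ) hk hj (by omega)
            omega
          · have hs : G.Adj v (cycF c (r + t - c.length)) := by
              refine hPn (r + t) (r + t - c.length) ?_ hadj
              conv_lhs => rw [show r + t = (r + t - c.length) + c.length by omega]
              rw [Nat.add_mod_right]
            have hmem : r + t - c.length ∈ l₀ :=
              (hl₀mem _).mpr ((hmemS _).mpr ⟨by omega, hs⟩)
            obtain ⟨k, hk, hku⟩ := hidx _ hmem
            have := hmono' 0 k h0lt hk (by omega)
            omega
        have hgr : gap r ≤ q' := Nat.find_le ⟨by omega, hPq'⟩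
        have hgr2 : ¬ (gap r < q') := fun hcon =>
          hnb (gap r) (hgap_pos r) hcon (hgap_adj r)
        have hge : cycF c r' = cycF c (r + gap r) := by
          rw [show gap r = q' by omega]
          exact (cycF_congr hcong).symm
        rw [hge]
        unfold distW
        rcases hg13 r hPr with h1 | h1 <;> rw [h1]
        · rw [dist_cycF_one hcyc hn6]
          simp
        · rw [dist_cycF_three hcyc hn6]
          simp
end BlockCase
end

section
/- Under the standing setup, let 𝓗 = C ∪ P_1 ∪ ⋯ ∪ P_ℓ be a sparse ear decomposition in G. If F is a cycle contained in 𝓗, then the induced subgraph G[V(F)] contains a long hole. -/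
open SimpleGraph

variable {V : Type}

section Stmt10Aux

open SimpleGraph

variable {G : SimpleGraph V}

lemma getVert_mem_support' {u v : V} (p : G.Walk u v) (n : ℕ) : p.getVert n ∈ p.support := by
  rcases le_or_gt n p.length with h | h
  · exact Walk.mem_support_iff_exists_getVert.2 ⟨n, rfl, h⟩
  · rw [Walk.getVert_of_length_le p h.le]; exact Walk.end_mem_support p

lemma getVert_injOn_of_isPath' : ∀ {u v : V} (p : G.Walk u v), p.IsPath →
    ∀ a b : ℕ, a ≤ p.length → b ≤ p.length → p.getVert a = p.getVert b → a = b
  | _, _, Walk.nil, _, a, b, ha, hb, _ => by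
      simp only [Walk.length_nil, Nat.le_zero] at ha hb; omega
  | _, _, Walk.cons h q, hp, a, b, ha, hb, hab => by
      rw [Walk.cons_isPath_iff] at hp
      match a, b with
      | 0, 0 => rfl
      | 0, (b+1) =>
          exfalso
          rw [Walk.getVert_zero, Walk.getVert_cons_succ] at hab
          exact hp.2 (hab ▸ getVert_mem_support' q b)
      | (a+1), 0 =>
          exfalso
          rw [Walk.getVert_zero, Walk.getVert_cons_succ] at hab
          exact hp.2 (hab.symm ▸ getVert_mem_support' q a)
      | (a+1), (b+1) =>
          have := getVert_injOn_of_isPath' q hp.1 a b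
            (by simpa [Walk.length_cons] using Nat.succ_le_succ_iff.mp ha)
            (by simpa [Walk.length_cons] using Nat.succ_le_succ_iff.mp hb)
            (by simpa [Walk.getVert_cons_succ] using hab)
          omega

/-- Neighbors along the `toSubgraph` of a path are the adjacent `getVert`s. -/
lemma toSubgraph_adj_of_isPath' {u v : V} {p : G.Walk u v} (hp : p.IsPath) {s : ℕ}
    (hs : s ≤ p.length) {x : V} (h : p.toSubgraph.Adj (p.getVert s) x) :
    (0 < s ∧ x = p.getVert (s-1)) ∨ (s < p.length ∧ x = p.getVert (s+1)) := by
  obtain ⟨i, hi, hil⟩ := (Walk.toSubgraph_adj_iff _).1 h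
  rw [Sym2.eq_iff] at hi
  rcases hi with ⟨h1, h2⟩ | ⟨h1, h2⟩
  · have : i = s := getVert_injOn_of_isPath' p hp i s hil.le hs h1
    subst this
    exact Or.inr ⟨hil, h2.symm⟩
  · have : i + 1 = s := getVert_injOn_of_isPath' p hp (i+1) s hil hs h2
    subst this
    exact Or.inl ⟨Nat.succ_pos _, by simpa using h1.symm⟩

/-- Splitting a cycle at its base point. -/
lemma cycle_split' {t : V} {W : G.Walk t t} (hW : W.IsCycle) :
    ∃ (x y : V) (P : G.Walk x y), P.IsPath ∧ t ∉ P.support ∧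
      (∀ v ∈ P.support, v ∈ W.support) ∧ s(t, x) ∈ W.edges ∧ s(y, t) ∈ W.edges ∧ x ≠ y ∧
      (∀ e ∈ P.edges, e ∈ W.edges) := by
  cases W with
  | nil => exact absurd rfl hW.ne_nil
  | @cons _ x₁ _ h W₁ =>
    have hlen : 2 ≤ W₁.length := by
      have := hW.three_le_length
      simp only [Walk.length_cons] at this
      omega
    rw [Walk.cons_isCycle_iff] at hW
    have hrevPath : W₁.reverse.IsPath := hW.1.reverse
    cases hrev : W₁.reverse with
    | nil =>
        exfalso
        have := congrArg Walk.length hrev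
        simp only [Walk.length_reverse, Walk.length_nil] at this
        omega
    | @cons _ y _ h₂ Q =>
        rw [hrev, Walk.cons_isPath_iff] at hrevPath
        have hyt : s(y, t) ∈ W₁.edges := by
          have : s(t, y) ∈ W₁.reverse.edges := by
            rw [hrev]; exact List.mem_cons_self
          rw [Walk.edges_reverse, List.mem_reverse] at this
          rwa [Sym2.eq_swap] at this
        refine ⟨x₁, y, Q.reverse, hrevPath.1.reverse, ?_, ?_, ?_, ?_, ?_, ?_⟩
        · rw [Walk.support_reverse, List.mem_reverse]; exact hrevPath.2
        · intro v hv
          rw [Walk.support_reverse, List.mem_reverse] at hv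
          have : v ∈ W₁.reverse.support := by
            rw [hrev, Walk.support_cons]; exact List.mem_cons_of_mem _ hv
          rw [Walk.support_reverse, List.mem_reverse] at this
          rw [Walk.support_cons]
          exact List.mem_cons_of_mem _ this
        · rw [Walk.edges_cons]; exact List.mem_cons_self
        · rw [Walk.edges_cons]; exact List.mem_cons_of_mem _ hyt
        · rintro rfl
          exact hW.2 (by rwa [Sym2.eq_swap] at hyt)
        · intro e he
          rw [Walk.edges_reverse, List.mem_reverse] at he
          have : e ∈ W₁.reverse.edges := by
            rw [hrev, Walk.edges_cons]; exact List.mem_cons_of_mem _ he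
          rw [Walk.edges_reverse, List.mem_reverse] at this
          rw [Walk.edges_cons]
          exact List.mem_cons_of_mem _ this

lemma cycle_two_nbrs' {t : V} {F : G.Walk t t} (hF : F.IsCycle) {v : V} (hv : v ∈ F.support) :
    ∃ x y, x ≠ y ∧ F.toSubgraph.Adj v x ∧ F.toSubgraph.Adj v y := by
  classical
  obtain ⟨x, y, P, _, _, _, hex, hey, hxy, _⟩ := cycle_split' (hF.rotate hv)
  have hsub : (F.rotate v hv).toSubgraph = F.toSubgraph := F.toSubgraph_rotate hv
  refine ⟨x, y, hxy, ?_, ?_⟩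
  · have : (F.rotate v hv).toSubgraph.Adj v x := by
      rw [← SimpleGraph.Subgraph.mem_edgeSet, Walk.mem_edges_toSubgraph]; exact hex
    rwa [hsub] at this
  · have : (F.rotate v hv).toSubgraph.Adj y v := by
      rw [← SimpleGraph.Subgraph.mem_edgeSet, Walk.mem_edges_toSubgraph]; exact hey
    rw [hsub] at this
    exact this.symm

lemma cycle_start_pin' {t : V} {W : G.Walk t t} (hW : W.IsCycle) :
    ∃ n₁ n₂, ∀ u, W.toSubgraph.Adj t u → u = n₁ ∨ u = n₂ := by
  cases W with
  | nil => exact absurd rfl hW.ne_nil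
  | @cons _ x₁ _ h W₁ =>
    rw [Walk.cons_isCycle_iff] at hW
    refine ⟨x₁, W₁.getVert (W₁.length - 1), fun u hu => ?_⟩
    have hu' : (G.subgraphOfAdj h ⊔ W₁.toSubgraph).Adj t u := hu
    rcases SimpleGraph.Subgraph.sup_adj.1 hu' with h1 | h2
    · have h1' : s(t, x₁) = s(t, u) := h1
      rw [Sym2.eq_iff] at h1'
      rcases h1' with ⟨-, h3⟩ | ⟨h3, h4⟩
      · exact Or.inl h3.symm
      · exact absurd h4.symm h.ne
    · have h2' : W₁.toSubgraph.Adj (W₁.getVert W₁.length) u := by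
        rwa [W₁.getVert_length]
      rcases toSubgraph_adj_of_isPath' hW.1 le_rfl h2' with ⟨_, h3⟩ | ⟨h3, _⟩
      · exact Or.inr h3
      · exact absurd h3 (lt_irrefl _)

lemma cycle_adj_pin' {t : V} {C : G.Walk t t} (hC : C.IsCycle) {v : V} (hv : v ∈ C.support) :
    ∃ n₁ n₂, ∀ u, C.toSubgraph.Adj v u → u = n₁ ∨ u = n₂ := by
  classical
  obtain ⟨n₁, n₂, hpin⟩ := cycle_start_pin' (hC.rotate hv)
  exact ⟨n₁, n₂, fun u hu => hpin u (by rwa [C.toSubgraph_rotate hv])⟩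

private lemma getVert_append_own {a b c' : V} (p : G.Walk a b) (r : G.Walk b c') :
    (p.append r).getVert p.length = b := by
  rw [Walk.getVert_append, if_neg (lt_irrefl _), Nat.sub_self, Walk.getVert_zero]

/-- A length-minimal walk between two vertices is an induced path. -/
lemma shortest_walk_induced' {K : SimpleGraph V} {x y : V} {q : K.Walk x y}
    (hmin : ∀ r : K.Walk x y, q.length ≤ r.length) {u v : V}
    (hu : u ∈ q.support) (hv : v ∈ q.support) (hadj : K.Adj u v) :
    q.toSubgraph.Adj u v := by
  classical
  have hgv : ∀ (w : V) (hw : w ∈ q.support), q.getVert (q.takeUntil w hw).length = w := by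
    intro w hw
    have := getVert_append_own (q.takeUntil w hw) (q.dropUntil w hw)
    rwa [q.take_spec hw] at this
  have hlen : ∀ (w : V) (hw : w ∈ q.support),
      (q.takeUntil w hw).length + (q.dropUntil w hw).length = q.length := by
    intro w hw
    rw [← Walk.length_append, q.take_spec hw]
  have h1 : (q.takeUntil v hv).length ≤ (q.takeUntil u hu).length + 1 := by
    have := hmin ((q.takeUntil u hu).append (Walk.cons hadj (q.dropUntil v hv)))
    rw [Walk.length_append, Walk.length_cons] at this
    have h2 := hlen v hv
    omega
  have h2 : (q.takeUntil u hu).length ≤ (q.takeUntil v hv).length + 1 := by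
    have := hmin ((q.takeUntil v hv).append (Walk.cons hadj.symm (q.dropUntil u hu)))
    rw [Walk.length_append, Walk.length_cons] at this
    have h2 := hlen u hu
    omega
  have hne : (q.takeUntil u hu).length ≠ (q.takeUntil v hv).length := by
    intro h
    apply hadj.ne
    rw [← hgv u hu, ← hgv v hv, h]
  rcases (by omega : (q.takeUntil v hv).length = (q.takeUntil u hu).length + 1 ∨
      (q.takeUntil u hu).length = (q.takeUntil v hv).length + 1) with h3 | h3
  · have hlt : (q.takeUntil u hu).length < q.length := by
      have := q.length_takeUntil_le hv
      omega
    have := Walk.toSubgraph_adj_getVert q hlt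
    rwa [hgv u hu, ← h3, hgv v hv] at this
  · have hlt : (q.takeUntil v hv).length < q.length := by
      have := q.length_takeUntil_le hu
      omega
    have := Walk.toSubgraph_adj_getVert q hlt
    rw [hgv v hv, ← h3, hgv u hu] at this
    exact this.symm

lemma del_walk_not_mem' {S : Set V} :
    ∀ {x y : V} (w : (G.del S).Walk x y), x ∉ S → ∀ u ∈ w.support, u ∉ S := by
  intro x y w
  induction w with
  | nil => intro hx u hu; rw [Walk.support_nil, List.mem_singleton] at hu; rwa [hu]
  | cons h w ih =>
      intro hx u hu
      rw [Walk.support_cons, List.mem_cons] at hu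
      rcases hu with rfl | hu
      · exact hx
      · exact ih h.2.2 u hu

lemma cycle_support_card' [DecidableEq V] {t : V} {w : G.Walk t t} (hw : w.IsCycle) :
    w.support.toFinset.card = w.length := by
  have h1 : w.support = t :: w.support.tail := w.support_eq_cons
  have ht : t ∈ w.support.tail := by
    cases w with
    | nil => exact absurd rfl hw.ne_nil
    | cons h q => rw [Walk.support_cons, List.tail_cons]; exact q.end_mem_support
  have hset : w.support.toFinset = w.support.tail.toFinset := by
    rw [h1, List.toFinset_cons]
    exact Finset.insert_eq_self.2 (List.mem_toFinset.2 ht)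
  have hcard : w.support.tail.toFinset.card = w.support.tail.length :=
    List.toFinset_card_of_nodup hw.support_nodup
  have hlen : w.support.length = w.length + 1 := w.length_support
  rw [hset, hcard, List.length_tail, hlen]
  omega

lemma second_vertex_edge {a b : V} (q : G.Walk a b) (hne : a ≠ b) :
    s(a, q.getVert 1) ∈ q.edges ∧ q.getVert 1 ∈ q.support := by
  have hlen : 0 < q.length := by
    rcases Nat.eq_zero_or_pos q.length with h | h
    · exact absurd (Walk.eq_of_length_eq_zero h) hne
    · exact h
  have h2 := Walk.toSubgraph_adj_getVert q hlen
  rw [Walk.getVert_zero] at h2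
  exact ⟨(Walk.mem_edges_toSubgraph q).1 (SimpleGraph.Subgraph.mem_edgeSet.2 h2),
    getVert_mem_support' _ _⟩

lemma takeUntil_dropUntil_eq [DecidableEq V] {a b : V} {q : G.Walk a b} (hq : q.IsPath)
    {u v : V} (hu : u ∈ q.support)
    (h1 : v ∈ (q.takeUntil u hu).support) (h2 : v ∈ (q.dropUntil u hu).support) : v = u := by
  have hspec := q.take_spec hu
  have hnd : ((q.takeUntil u hu).append (q.dropUntil u hu)).support.Nodup := by
    rw [hspec]; exact hq.support_nodup
  rw [Walk.support_append, List.nodup_append'] at hnd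
  by_contra hne
  have h2' : v ∈ (q.dropUntil u hu).support.tail := by
    have hc := (q.dropUntil u hu).support_eq_cons
    rw [hc] at h2
    rcases List.mem_cons.1 h2 with h | h
    · exact absurd h hne
    · exact h
  exact hnd.2.2 h1 h2'


end Stmt10Aux
theorem statement_10
    [Fintype V] (G : SimpleGraph V) (k : ℕ) (hk : 1 ≤ k) (h4 : C4Free G)
    (v0 : V) (c : G.Walk v0 v0) (hc : IsLongHoleW G c)
    (hshort : ∀ (u : V) (w : G.Walk u u), IsLongHoleW G w → c.length ≤ w.length)
    (hbig : muK k < (c.length : ℝ))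
    (hnone : NoLongHole (G.del {x | x ∈ c.support}))
    (d : EarData G) (hd : IsSED G c d)
    (t : V) (F : G.Walk t t) (hF : F.IsCycle) (hFsub : F.toSubgraph ≤ d.whole c) :
    ∃ (u : V) (w : G.Walk u u), IsLongHoleW G w ∧ ∀ x ∈ w.support, x ∈ F.support := by
  classical
  obtain ⟨hcCyc, hcLen, hcInd⟩ := hc
  -- membership characterizations of `prev`
  have hprev_mem : ∀ (j : ℕ) (v : V),
      v ∈ (d.prev c j).verts ↔ v ∈ c.support ∨
        ∃ i : Fin d.n, (i : ℕ) < j ∧ v ∈ (d.ear i).support := by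
    intro j v
    simp [EarData.prev, Subgraph.verts_sup, Subgraph.verts_iSup, Set.mem_iUnion,
      Walk.mem_verts_toSubgraph]
  have hedge : ∀ {x y : V}, F.toSubgraph.Adj x y →
      c.toSubgraph.Adj x y ∨ ∃ j : Fin d.n, (d.ear j).toSubgraph.Adj x y := by
    intro x y h
    have h2 : (d.prev c d.n).Adj x y := hFsub.2 h
    have h3 : (c.toSubgraph ⊔ ⨆ i : Fin d.n, ⨆ _ : (i : ℕ) < d.n,
        (d.ear i).toSubgraph).Adj x y := h2
    rcases Subgraph.sup_adj.1 h3 with h4 | h4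
    · exact Or.inl h4
    · rw [Subgraph.iSup_adj] at h4
      obtain ⟨j, hj⟩ := h4
      rw [Subgraph.iSup_adj] at hj
      obtain ⟨-, hj⟩ := hj
      exact Or.inr ⟨j, hj⟩
  -- components of the ear hypotheses
  have hearP : ∀ j : Fin d.n, (d.ear j).IsPath := fun j => (hd.2 j).1
  have hearLen : ∀ j : Fin d.n, 6 ≤ (d.ear j).length := fun j => (hd.2 j).2.1
  have hearA : ∀ j, d.A j ∈ c.support := fun j => (hd.2 j).2.2.1
  have hearB : ∀ j : Fin d.n, d.B j ∈ (d.prev c (j : ℕ)).verts := fun j => (hd.2 j).2.2.2.1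
  have hearInt : ∀ j : Fin d.n, ∀ x ∈ (d.ear j).support, x ≠ d.A j → x ≠ d.B j →
      x ∉ (d.prev c (j : ℕ)).verts := fun j => (hd.2 j).2.2.2.2.1
  have hearInd : ∀ j : Fin d.n, ∀ x ∈ (d.ear j).support, x ≠ d.A j → x ≠ d.B j →
      ∀ y ∈ (d.ear j).support, y ≠ d.A j → y ≠ d.B j → G.Adj x y →
        (d.ear j).toSubgraph.Adj x y := fun j => (hd.2 j).2.2.2.2.2.1
  have hear234 : ∀ j : Fin d.n, ∀ s ∈ ({2, 3, 4} : Set ℕ), ∀ y ∈ (d.prev c (j : ℕ)).verts,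
      ¬ G.Adj ((d.ear j).getVert s) y := fun j => (hd.2 j).2.2.2.2.2.2
  -- interior vertices of ears
  have hInt : ∀ (j : Fin d.n) (s : ℕ), 1 ≤ s → s ≤ (d.ear j).length - 1 →
      (d.ear j).getVert s ≠ d.A j ∧ (d.ear j).getVert s ≠ d.B j ∧
        (d.ear j).getVert s ∉ (d.prev c (j : ℕ)).verts := by
    intro j s h1 h2
    have hL := hearLen j
    have hne1 : (d.ear j).getVert s ≠ d.A j := by
      intro h
      have h0 : (d.ear j).getVert 0 = d.A j := Walk.getVert_zero _
      have := getVert_injOn_of_isPath' _ (hearP j) s 0 (by omega) (by omega) (h.trans h0.symm)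
      omega
    have hne2 : (d.ear j).getVert s ≠ d.B j := by
      intro h
      have h0 : (d.ear j).getVert (d.ear j).length = d.B j := Walk.getVert_length _
      have := getVert_injOn_of_isPath' _ (hearP j) s (d.ear j).length (by omega) le_rfl
        (h.trans h0.symm)
      omega
    exact ⟨hne1, hne2, hearInt j _ (getVert_mem_support' _ _) hne1 hne2⟩
  by_cases hJ : ∃ j : Fin d.n, ∃ x, x ∈ F.support ∧ x ∈ (d.ear j).support ∧
      x ∉ (d.prev c (j : ℕ)).verts
  · -- Case B : F passes through the interior of some ear
    obtain ⟨i, hiJ, himax⟩ : ∃ i : Fin d.n,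
        (∃ x, x ∈ F.support ∧ x ∈ (d.ear i).support ∧ x ∉ (d.prev c (i : ℕ)).verts) ∧
        ∀ j : Fin d.n, (∃ x, x ∈ F.support ∧ x ∈ (d.ear j).support ∧
            x ∉ (d.prev c (j : ℕ)).verts) → j ≤ i := by
      obtain ⟨j₀, hj₀⟩ := hJ
      set T : Finset (Fin d.n) := Finset.univ.filter (fun j => ∃ x, x ∈ F.support ∧
        x ∈ (d.ear j).support ∧ x ∉ (d.prev c (j : ℕ)).verts) with hT
      have hTne : T.Nonempty := ⟨j₀, by simp [hT, hj₀]⟩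
      refine ⟨T.max' hTne, ?_, ?_⟩
      · have := T.max'_mem hTne
        simpa [hT] using this
      · intro j hj
        exact T.le_max' j (by simp [hT, hj])
    set e : G.Walk (d.A i) (d.B i) := d.ear i with he_def
    set m : ℕ := e.length with hm_def
    have hm : 6 ≤ m := hearLen i
    set p : ℕ → V := fun s => e.getVert s with hp_def
    have hEpath : e.IsPath := hearP i
    have hpne : ∀ a b : ℕ, a ≤ m → b ≤ m → a ≠ b → p a ≠ p b := by
      intro a b ha hb hab h
      exact hab (getVert_injOn_of_isPath' e hEpath a b ha hb h)
    have hIntE : ∀ s : ℕ, 1 ≤ s → s ≤ m - 1 →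
        e.getVert s ≠ d.A i ∧ e.getVert s ≠ d.B i ∧
          e.getVert s ∉ (d.prev c (i : ℕ)).verts := by
      intro s h1 h2
      exact hInt i s h1 (show s ≤ e.length - 1 by omega)
    have hEInd : ∀ x ∈ e.support, x ≠ d.A i → x ≠ d.B i →
        ∀ y ∈ e.support, y ≠ d.A i → y ≠ d.B i → G.Adj x y →
          e.toSubgraph.Adj x y := hearInd i
    have hE234 : ∀ s ∈ ({2, 3, 4} : Set ℕ), ∀ y ∈ (d.prev c (i : ℕ)).verts,
        ¬ G.Adj (e.getVert s) y := hear234 i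
    -- K1aux : everything in the decomposition that F passes through is in
    -- prev i or in ear i
    have K1aux : ∀ N : ℕ, ∀ v, v ∈ F.support → v ∈ (d.prev c N).verts →
        v ∈ (d.prev c (i : ℕ)).verts ∨ v ∈ e.support := by
      intro N
      induction N using Nat.strong_induction_on with
      | _ N IH =>
        intro v hvF hvN
        rw [hprev_mem] at hvN
        rcases hvN with hcs | ⟨j, hjN, hjsup⟩
        · exact Or.inl ((hprev_mem _ _).2 (Or.inl hcs))
        · rcases lt_trichotomy (j : ℕ) (i : ℕ) with hji | hji | hji
          · exact Or.inl ((hprev_mem _ _).2 (Or.inr ⟨j, hji, hjsup⟩))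
          · have hj : j = i := Fin.ext hji
            subst hj
            exact Or.inr hjsup
          · by_cases hvp : v ∈ (d.prev c (j : ℕ)).verts
            · exact IH (j : ℕ) hjN v hvF hvp
            · have := himax j ⟨v, hvF, hjsup, hvp⟩
              have : (j : ℕ) ≤ (i : ℕ) := this
              omega
    have K1 : ∀ v ∈ F.support, v ∈ (d.prev c (i : ℕ)).verts ∨ v ∈ e.support := by
      intro v hv
      obtain ⟨x, y, -, hvx, -⟩ := cycle_two_nbrs' hF hv
      have h2 : (d.whole c).Adj v x := hFsub.2 hvx
      have h3 : v ∈ (d.prev c d.n).verts := h2.fst_mem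
      exact K1aux d.n v hv h3
    -- K2 : F-edges at interior vertices of ear i are ear-i edges
    have K2 : ∀ v, v ∈ F.support → v ∈ e.support → v ∉ (d.prev c (i : ℕ)).verts →
        ∀ u, F.toSubgraph.Adj v u → e.toSubgraph.Adj v u := by
      intro v hvF hvE hvP u hadj
      rcases hedge hadj with hce | ⟨j, hje⟩
      · exact absurd ((hprev_mem _ _).2
          (Or.inl ((Walk.mem_verts_toSubgraph c).1 hce.fst_mem))) hvP
      · rcases lt_trichotomy (j : ℕ) (i : ℕ) with hji | hji | hji
        · have hvj : v ∈ (d.ear j).support := (Walk.mem_verts_toSubgraph _).1 hje.fst_mem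
          exact absurd ((hprev_mem _ _).2 (Or.inr ⟨j, hji, hvj⟩)) hvP
        · have hj : j = i := Fin.ext hji
          subst hj
          exact hje
        · exfalso
          have hvpj : v ∈ (d.prev c (j : ℕ)).verts := (hprev_mem _ _).2 (Or.inr ⟨i, hji, hvE⟩)
          have hvsupj : v ∈ (d.ear j).support := (Walk.mem_verts_toSubgraph _).1 hje.fst_mem
          have hLj := hearLen j
          have hAB : v = d.A j ∨ v = d.B j := by
            by_contra hcon
            push_neg at hcon
            exact hearInt j v hvsupj hcon.1 hcon.2 hvpj
          have hu_int : u ∈ (d.ear j).support ∧ u ∉ (d.prev c (j : ℕ)).verts := by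
            rcases hAB with hv1 | hv1
            · have hje' : (d.ear j).toSubgraph.Adj ((d.ear j).getVert 0) u := by
                rw [Walk.getVert_zero]
                rw [hv1] at hje
                exact hje
              rcases toSubgraph_adj_of_isPath' (hearP j) (by omega) hje' with ⟨h5, -⟩ | ⟨-, h6⟩
              · omega
              · rw [h6]
                exact ⟨getVert_mem_support' _ _, (hInt j 1 (by omega) (by omega)).2.2⟩
            · have hje' : (d.ear j).toSubgraph.Adj ((d.ear j).getVert (d.ear j).length) u := by
                rw [Walk.getVert_length]
                rw [hv1] at hje
                exact hje
              rcases toSubgraph_adj_of_isPath' (hearP j) le_rfl hje' with ⟨-, h6⟩ | ⟨h5, -⟩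
              · rw [h6]
                exact ⟨getVert_mem_support' _ _,
                  (hInt j ((d.ear j).length - 1) (by omega) (by omega)).2.2⟩
              · omega
          have huF : u ∈ F.support := (Walk.mem_verts_toSubgraph F).1 hadj.snd_mem
          have := himax j ⟨u, huF, hu_int.1, hu_int.2⟩
          have : (j : ℕ) ≤ (i : ℕ) := this
          omega
    -- pinning of F-neighbors at interior vertices of ear i
    have hpinF : ∀ s : ℕ, 1 ≤ s → s ≤ m - 1 → p s ∈ F.support →
        ∀ u, F.toSubgraph.Adj (p s) u → u = p (s-1) ∨ u = p (s+1) := by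
      intro s h1 h2 hmem u hadj
      have hI := hIntE s h1 h2
      have hEadj : e.toSubgraph.Adj (e.getVert s) u :=
        K2 (p s) hmem (getVert_mem_support' _ _) hI.2.2 u hadj
      rcases toSubgraph_adj_of_isPath' hEpath (by omega) hEadj with ⟨-, h⟩ | ⟨-, h⟩
      exacts [Or.inl h, Or.inr h]
    have hstep : ∀ s : ℕ, 1 ≤ s → s ≤ m - 1 → p s ∈ F.support →
        p (s-1) ∈ F.support ∧ p (s+1) ∈ F.support := by
      intro s h1 h2 hmem
      obtain ⟨x, y, hxy, hax, hay⟩ := cycle_two_nbrs' hF hmem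
      have hx := hpinF s h1 h2 hmem x hax
      have hy := hpinF s h1 h2 hmem y hay
      have hxm : x ∈ F.support := (Walk.mem_verts_toSubgraph F).1 hax.snd_mem
      have hym : y ∈ F.support := (Walk.mem_verts_toSubgraph F).1 hay.snd_mem
      rcases hx with hx' | hx' <;> rcases hy with hy' | hy'
      · exact absurd (hx'.trans hy'.symm) hxy
      · exact ⟨hx' ▸ hxm, hy' ▸ hym⟩
      · exact ⟨hy' ▸ hym, hx' ▸ hxm⟩
      · exact absurd (hx'.trans hy'.symm) hxy
    -- propagate membership along the ear
    obtain ⟨x₀, hx₀F, hx₀E, hx₀P⟩ := hiJ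
    obtain ⟨s₀, hs₀v, hs₀le⟩ := Walk.mem_support_iff_exists_getVert.1 hx₀E
    have hs₀1 : 1 ≤ s₀ := by
      rcases Nat.eq_zero_or_pos s₀ with h | h
      · exfalso
        apply hx₀P
        rw [← hs₀v, h, Walk.getVert_zero]
        exact (hprev_mem _ _).2 (Or.inl (hearA i))
      · exact h
    have hs₀m : s₀ ≤ m - 1 := by
      rcases Nat.lt_or_ge s₀ m with h | h
      · omega
      · exfalso
        apply hx₀P
        rw [← hs₀v, Walk.getVert_of_length_le e (by omega)]
        exact hearB i
    have hx₀p : p s₀ ∈ F.support := by rw [hp_def]; simp only []; rw [hs₀v]; exact hx₀F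
    have hdown : ∀ r : ℕ, r ≤ s₀ - 1 → p (s₀ - r) ∈ F.support := by
      intro r
      induction r with
      | zero => intro _; simpa using hx₀p
      | succ r IH =>
          intro hr
          have h1 : p (s₀ - r) ∈ F.support := IH (by omega)
          have h2 := (hstep (s₀ - r) (by omega) (by omega) h1).1
          have h3 : s₀ - r - 1 = s₀ - (r + 1) := by omega
          rwa [h3] at h2
    have hP1 : p 1 ∈ F.support := by
      have := hdown (s₀ - 1) le_rfl
      have h3 : s₀ - (s₀ - 1) = 1 := by omega
      rwa [h3] at this
    have hup : ∀ s : ℕ, 1 ≤ s → s ≤ m - 1 → p s ∈ F.support := by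
      intro s
      induction s with
      | zero => intro h; omega
      | succ s IH =>
          intro h1 h2
          rcases Nat.eq_zero_or_pos s with h | h
          · subst h; exact hP1
          · have hs : p s ∈ F.support := IH (by omega) (by omega)
            exact (hstep s (by omega) (by omega) hs).2
    have hPmem : ∀ s : ℕ, 1 ≤ s → s ≤ 5 → p s ∈ F.support := fun s h1 h2 =>
      hup s h1 (by omega)
    -- G-neighborhood pinning within F.support
    have hK3 : ∀ s : ℕ, s = 2 ∨ s = 3 ∨ s = 4 → ∀ u ∈ F.support, G.Adj (p s) u →
        u = p (s-1) ∨ u = p (s+1) := by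
      intro s hs u huF hadj
      have hs' : s ∈ ({2, 3, 4} : Set ℕ) := by rcases hs with rfl | rfl | rfl <;> simp
      by_cases hup' : u ∈ (d.prev c (i : ℕ)).verts
      · exact absurd hadj (hE234 s hs' u hup')
      · have huE : u ∈ e.support := (K1 u huF).resolve_left hup'
        have hI := hIntE s (by omega) (by omega)
        have hune : u ≠ d.A i := fun h =>
          hup' (h ▸ ((hprev_mem _ _).2 (Or.inl (hearA i))))
        have hune2 : u ≠ d.B i := fun h => hup' (h ▸ hearB i)
        have hEadj := hEInd (p s) (getVert_mem_support' _ _) hI.1 hI.2.1 u huE hune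
          hune2 hadj
        rcases toSubgraph_adj_of_isPath' hEpath (by omega : s ≤ e.length) hEadj
          with ⟨-, h⟩ | ⟨-, h⟩
        exacts [Or.inl h, Or.inr h]
    have hnadj15 : ¬ G.Adj (p 1) (p 5) := by
      intro hadj
      have hI1 := hIntE 1 (by omega) (by omega)
      have hI5 := hIntE 5 (by omega) (by omega)
      have hEadj := hEInd (p 1) (getVert_mem_support' _ _) hI1.1 hI1.2.1 (p 5)
        (getVert_mem_support' _ _) hI5.1 hI5.2.1 hadj
      rcases toSubgraph_adj_of_isPath' hEpath (by omega : 1 ≤ e.length) hEadj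
        with ⟨-, h⟩ | ⟨-, h⟩
      · have h' : p 5 = e.getVert 0 := by simpa using h
        exact hpne 5 0 (by omega) (by omega) (by omega) h'.symm.symm
      · have h' : p 5 = e.getVert 2 := by simpa using h
        exact hpne 5 2 (by omega) (by omega) (by omega) h'.symm.symm
    -- pinning for F.toSubgraph
    have hFpin : ∀ s : ℕ, s = 2 ∨ s = 3 ∨ s = 4 → ∀ u, F.toSubgraph.Adj (p s) u →
        u = p (s-1) ∨ u = p (s+1) := by
      intro s hs u hadj
      exact hK3 s hs u ((Walk.mem_verts_toSubgraph F).1 hadj.snd_mem) hadj.adj_sub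
    -- split the cycle F at p 3
    have hp3F : p 3 ∈ F.support := hPmem 3 (by omega) (by omega)
    obtain ⟨x, y, P, hPpath, hPt, hPsup, hex, hey, hxy, hPe⟩ := cycle_split' (hF.rotate hp3F)
    have hrsub : (F.rotate (p 3) hp3F).toSubgraph = F.toSubgraph := F.toSubgraph_rotate hp3F
    have hrsupp : ∀ v, v ∈ (F.rotate (p 3) hp3F).support → v ∈ F.support := by
      intro v h
      rw [← Walk.mem_verts_toSubgraph, hrsub, Walk.mem_verts_toSubgraph] at h
      exact h
    have hredge : ∀ {a b : V}, s(a, b) ∈ (F.rotate (p 3) hp3F).edges → F.toSubgraph.Adj a b := by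
      intro a b h
      rw [← hrsub]
      exact Subgraph.mem_edgeSet.1 ((Walk.mem_edges_toSubgraph _).2 h)
    have hx24 : x = p 2 ∨ x = p 4 := hFpin 3 (by tauto) x (hredge hex)
    have hy24 : y = p 2 ∨ y = p 4 := hFpin 3 (by tauto) y (hredge hey).symm
    obtain ⟨P', hP'path, hP't, hP'sup, hP'e⟩ :
        ∃ P' : G.Walk (p 4) (p 2), P'.IsPath ∧ p 3 ∉ P'.support ∧
          (∀ v ∈ P'.support, v ∈ F.support) ∧
          (∀ a b : V, s(a, b) ∈ P'.edges → F.toSubgraph.Adj a b) := by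
      have hPF : ∀ v ∈ P.support, v ∈ F.support := fun v hv => hrsupp v (hPsup v hv)
      have hPFe : ∀ a b : V, s(a, b) ∈ P.edges → F.toSubgraph.Adj a b := fun a b h =>
        hredge (hPe _ h)
      rcases hx24 with rfl | rfl
      · rcases hy24 with rfl | rfl
        · exact absurd rfl hxy
        · refine ⟨P.reverse, hPpath.reverse, ?_, ?_, ?_⟩
          · rwa [Walk.support_reverse, List.mem_reverse]
          · intro v hv; rw [Walk.support_reverse, List.mem_reverse] at hv; exact hPF v hv
          · intro a b h; rw [Walk.edges_reverse, List.mem_reverse] at h; exact hPFe a b h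
      · rcases hy24 with rfl | rfl
        · exact ⟨P, hPpath, hPt, hPF, hPFe⟩
        · exact absurd rfl hxy
    -- peel off p 5 and p 1
    have hne42 : p 4 ≠ p 2 := hpne 4 2 (by omega) (by omega) (by omega)
    obtain ⟨hedge1, hmem1⟩ := second_vertex_edge P' hne42
    have hx₁ : P'.getVert 1 = p 5 := by
      rcases hFpin 4 (by tauto) _ (hP'e _ _ hedge1) with h | h
      · exact absurd (h ▸ hmem1) hP't
      · exact h
    have h5P' : p 5 ∈ P'.support := hx₁ ▸ hmem1
    set M0 := P'.dropUntil (p 5) h5P' with hM0def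
    have hM0path : M0.IsPath := hP'path.dropUntil _
    have hM0sup : ∀ v ∈ M0.support, v ∈ P'.support := fun v hv =>
      Walk.support_dropUntil_subset _ _ hv
    have h4M0 : p 4 ∉ M0.support := by
      intro h
      have h4take : p 4 ∈ (P'.takeUntil (p 5) h5P').support := Walk.start_mem_support _
      exact hpne 4 5 (by omega) (by omega) (by omega)
        (takeUntil_dropUntil_eq hP'path h5P' h4take h)
    have hM0edges : ∀ a b : V, s(a, b) ∈ M0.edges → F.toSubgraph.Adj a b := fun a b h =>
      hP'e a b (Walk.edges_dropUntil_subset _ _ h)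
    have hne25 : p 2 ≠ p 5 := hpne 2 5 (by omega) (by omega) (by omega)
    obtain ⟨hedge2, hmem2⟩ := second_vertex_edge M0.reverse hne25.symm.symm
    have hz : M0.reverse.getVert 1 = p 1 := by
      have hFz : F.toSubgraph.Adj (p 2) (M0.reverse.getVert 1) := by
        apply hM0edges
        rwa [Walk.edges_reverse, List.mem_reverse] at hedge2
      rcases hFpin 2 (by tauto) _ hFz with h | h
      · exact h
      · exfalso
        have hmem : M0.reverse.getVert 1 ∈ M0.support := by
          have := hmem2
          rwa [Walk.support_reverse, List.mem_reverse] at this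
        exact hP't (h ▸ (hM0sup _ hmem))
    have h1M0r : p 1 ∈ M0.reverse.support := hz ▸ hmem2
    set M := M0.reverse.dropUntil (p 1) h1M0r with hMdef
    have hMpath : M.IsPath := hM0path.reverse.dropUntil _
    have hMsup : ∀ v ∈ M.support, v ∈ M0.support := by
      intro v hv
      have := Walk.support_dropUntil_subset _ _ hv
      rwa [Walk.support_reverse, List.mem_reverse] at this
    have hM2 : p 2 ∉ M.support := by
      intro h
      have h2take : p 2 ∈ (M0.reverse.takeUntil (p 1) h1M0r).support := Walk.start_mem_support _
      exact hpne 2 1 (by omega) (by omega) (by omega)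
        (takeUntil_dropUntil_eq hM0path.reverse h1M0r h2take h)
    have hM3 : p 3 ∉ M.support := fun h => hP't (hM0sup _ (hMsup _ h))
    have hM4 : p 4 ∉ M.support := fun h => h4M0 (hMsup _ h)
    have hMF : ∀ v ∈ M.support, v ∈ F.support := fun v hv => hP'sup v (hM0sup v (hMsup v hv))
    -- the deleted graph
    set S : Set V := {v | v = p 2 ∨ v = p 3 ∨ v = p 4 ∨ v ∉ F.support} with hSdef
    set K := G.del S with hKdef
    have hnotS : ∀ v ∈ M.support, v ∉ S := by
      intro v hv hvS
      rcases hvS with h | h | h | h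
      · exact hM2 (h ▸ hv)
      · exact hM3 (h ▸ hv)
      · exact hM4 (h ▸ hv)
      · exact h (hMF v hv)
    have hMK : ∀ ed ∈ M.edges, ed ∈ K.edgeSet := by
      intro ed hed
      revert hed
      refine Sym2.ind (fun a b => ?_) ed
      intro hed
      rw [SimpleGraph.mem_edgeSet]
      exact ⟨(G.mem_edgeSet).1 (M.edges_subset_edgeSet hed),
        hnotS a (M.fst_mem_support_of_mem_edges hed),
        hnotS b (M.snd_mem_support_of_mem_edges hed)⟩
    have hreach : K.Reachable (p 1) (p 5) := ⟨M.transfer K hMK⟩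
    obtain ⟨q, hqpath, hqlen⟩ := hreach.exists_path_of_dist
    have hqmin : ∀ r : K.Walk (p 1) (p 5), q.length ≤ r.length := by
      intro r; rw [hqlen]; exact SimpleGraph.dist_le r
    have hq1S : (p 1) ∉ S := by
      intro h
      rcases h with h | h | h | h
      · exact hpne 1 2 (by omega) (by omega) (by omega) h
      · exact hpne 1 3 (by omega) (by omega) (by omega) h
      · exact hpne 1 4 (by omega) (by omega) (by omega) h
      · exact h (hPmem 1 (by omega) (by omega))
    have hqnotS : ∀ v ∈ q.support, v ∉ S := del_walk_not_mem' q hq1S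
    have hqF : ∀ v ∈ q.support, v ∈ F.support := by
      intro v hv
      by_contra h
      exact hqnotS v hv (Or.inr (Or.inr (Or.inr h)))
    have hqnot234 : ∀ v ∈ q.support, ¬(v = p 2 ∨ v = p 3 ∨ v = p 4) := by
      intro v hv h
      rcases h with h | h | h
      · exact hqnotS v hv (Or.inl h)
      · exact hqnotS v hv (Or.inr (Or.inl h))
      · exact hqnotS v hv (Or.inr (Or.inr (Or.inl h)))
    have hqlen2 : 2 ≤ q.length := by
      by_contra h
      push_neg at h
      rcases (by omega : q.length = 0 ∨ q.length = 1) with h0 | h1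
      · exact hpne 1 5 (by omega) (by omega) (by omega) (Walk.eq_of_length_eq_zero h0)
      · have hadj : K.Adj (q.getVert 0) (q.getVert 1) := q.adj_getVert_succ (by omega)
        rw [Walk.getVert_zero] at hadj
        have h5 : q.getVert 1 = p 5 := by
          have := q.getVert_length
          rwa [h1] at this
        rw [h5] at hadj
        exact hnadj15 hadj.1
    -- transfer q back to G
    have hqG : ∀ ed ∈ q.edges, ed ∈ G.edgeSet := fun ed hed =>
      SimpleGraph.edgeSet_mono (G.del_le S) (q.edges_subset_edgeSet hed)
    set R := q.transfer G hqG with hRdef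
    have hRsup : R.support = q.support := q.support_transfer _
    have hRedges : R.edges = q.edges := q.edges_transfer _
    have hRlen : R.length = q.length := q.length_transfer _
    have hRpath : R.IsPath := hqpath.transfer _
    -- the chain p5 p4 p3 p2 p1
    have hadj12 : G.Adj (p 1) (p 2) := e.adj_getVert_succ (by omega)
    have hadj23 : G.Adj (p 2) (p 3) := e.adj_getVert_succ (by omega)
    have hadj34 : G.Adj (p 3) (p 4) := e.adj_getVert_succ (by omega)
    have hadj45 : G.Adj (p 4) (p 5) := e.adj_getVert_succ (by omega)
    set Zc : G.Walk (p 5) (p 1) := Walk.cons hadj45.symm (Walk.cons hadj34.symm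
      (Walk.cons hadj23.symm (Walk.cons hadj12.symm Walk.nil))) with hZcdef
    set Z : G.Walk (p 1) (p 1) := R.append Zc with hZdef
    have hZcsup : Zc.support = [p 5, p 4, p 3, p 2, p 1] := rfl
    have hZcedges : Zc.edges = [s(p 5, p 4), s(p 4, p 3), s(p 3, p 2), s(p 2, p 1)] := rfl
    have hZsupp : Z.support = R.support ++ [p 4, p 3, p 2, p 1] := by
      rw [hZdef, Walk.support_append, hZcsup]
      rfl
    have hZedges : Z.edges = R.edges ++ [s(p 5, p 4), s(p 4, p 3), s(p 3, p 2), s(p 2, p 1)] := by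
      rw [hZdef, Walk.edges_append, hZcedges]
    have hZlen : Z.length = R.length + 4 := by
      rw [hZdef, Walk.length_append]; rfl
    have hp1R : p 1 ∈ R.support := Walk.start_mem_support R
    have hp5R : p 5 ∈ R.support := Walk.end_mem_support R
    have hRnot234 : ∀ v ∈ R.support, ¬(v = p 2 ∨ v = p 3 ∨ v = p 4) := by
      intro v hv
      exact hqnot234 v (hRsup ▸ hv)
    have hZF : ∀ v ∈ Z.support, v ∈ F.support := by
      intro v hv
      rw [hZsupp, List.mem_append] at hv
      rcases hv with hv | hv
      · exact hqF v (hRsup ▸ hv)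
      · simp only [List.mem_cons, List.not_mem_nil, or_false] at hv
        rcases hv with h | h | h | h
        · exact h ▸ hPmem 4 (by omega) (by omega)
        · exact h ▸ hPmem 3 (by omega) (by omega)
        · exact h ▸ hPmem 2 (by omega) (by omega)
        · exact h ▸ hPmem 1 (by omega) (by omega)
    have hZcases : ∀ v ∈ Z.support, v ∈ R.support ∨ (v = p 2 ∨ v = p 3 ∨ v = p 4) := by
      intro v hv
      rw [hZsupp, List.mem_append] at hv
      rcases hv with hv | hv
      · exact Or.inl hv
      · simp only [List.mem_cons, List.not_mem_nil, or_false] at hv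
        rcases hv with h | h | h | h
        · exact Or.inr (Or.inr (Or.inr h))
        · exact Or.inr (Or.inr (Or.inl h))
        · exact Or.inr (Or.inl h)
        · exact Or.inl (h ▸ hp1R)
    -- Z is a cycle
    have hp1nR : p 1 ∉ R.support.tail := by
      have h := hRpath.support_nodup
      rw [R.support_eq_cons] at h
      exact (List.nodup_cons.1 h).1
    have hRtrail : R.edges.Nodup := hRpath.isTrail.edges_nodup
    have hSym : ∀ a b a' b' : ℕ, a ≤ 5 → b ≤ 5 → a' ≤ 5 → b' ≤ 5 →
        (a ≠ a' ∨ b ≠ b') → (a ≠ b' ∨ b ≠ a') → s(p a, p b) ≠ s(p a', p b') := by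
      intro a b a' b' ha hb ha' hb' h1 h2 h
      rw [Sym2.eq_iff] at h
      rcases h with ⟨e1, e2⟩ | ⟨e1, e2⟩
      · rcases h1 with h | h
        · exact hpne a a' (by omega) (by omega) h e1
        · exact hpne b b' (by omega) (by omega) h e2
      · rcases h2 with h | h
        · exact hpne a b' (by omega) (by omega) h e1
        · exact hpne b a' (by omega) (by omega) h e2
    have hZcyc : Z.IsCycle := by
      rw [Walk.isCycle_def]
      refine ⟨?_, ?_, ?_⟩
      · rw [Walk.isTrail_def, hZedges]
        rw [List.nodup_append']
        refine ⟨hRtrail, ?_, ?_⟩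
        · simp only [List.nodup_cons, List.mem_cons, List.not_mem_nil, or_false,
            List.nodup_nil, and_true, List.mem_singleton, not_or, not_false_eq_true]
          exact ⟨⟨hSym 5 4 4 3 (by omega) (by omega) (by omega) (by omega) (by omega)
                (by omega),
              hSym 5 4 3 2 (by omega) (by omega) (by omega) (by omega) (by omega)
                (by omega),
              hSym 5 4 2 1 (by omega) (by omega) (by omega) (by omega) (by omega)
                (by omega)⟩,
            ⟨hSym 4 3 3 2 (by omega) (by omega) (by omega) (by omega) (by omega)
                (by omega),
              hSym 4 3 2 1 (by omega) (by omega) (by omega) (by omega) (by omega)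
                (by omega)⟩,
            hSym 3 2 2 1 (by omega) (by omega) (by omega) (by omega) (by omega)
              (by omega)⟩
        · intro ed hedR hedZc
          simp only [List.mem_cons, List.not_mem_nil, or_false] at hedZc
          rcases hedZc with h | h | h | h
          · subst h
            exact (hRnot234 (p 4) (R.snd_mem_support_of_mem_edges hedR))
              (Or.inr (Or.inr rfl))
          · subst h
            exact (hRnot234 (p 4) (R.fst_mem_support_of_mem_edges hedR))
              (Or.inr (Or.inr rfl))
          · subst h
            exact (hRnot234 (p 3) (R.fst_mem_support_of_mem_edges hedR))
              (Or.inr (Or.inl rfl))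
          · subst h
            exact (hRnot234 (p 2) (R.fst_mem_support_of_mem_edges hedR))
              (Or.inl rfl)
      · intro h
        have := congrArg Walk.length h
        rw [hZlen] at this
        simp at this
      · rw [hZsupp, R.support_eq_cons, List.cons_append, List.tail_cons]
        rw [List.nodup_append']
        refine ⟨List.Nodup.of_cons (R.support_eq_cons ▸ hRpath.support_nodup), ?_, ?_⟩
        · simp only [List.nodup_cons, List.mem_cons, List.not_mem_nil, or_false,
            List.nodup_nil, and_true, List.mem_singleton, not_or, not_false_eq_true]
          exact ⟨⟨hpne 4 3 (by omega) (by omega) (by omega),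
              hpne 4 2 (by omega) (by omega) (by omega),
              hpne 4 1 (by omega) (by omega) (by omega)⟩,
            ⟨hpne 3 2 (by omega) (by omega) (by omega),
              hpne 3 1 (by omega) (by omega) (by omega)⟩,
            hpne 2 1 (by omega) (by omega) (by omega)⟩
        · intro v hv hv2
          have hvR : v ∈ R.support := List.mem_of_mem_tail hv
          simp only [List.mem_cons, List.not_mem_nil, or_false] at hv2
          rcases hv2 with h | h | h | h
          · exact hRnot234 v hvR (Or.inr (Or.inr h))
          · exact hRnot234 v hvR (Or.inr (Or.inl h))
          · exact hRnot234 v hvR (Or.inl h)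
          · exact hp1nR (h ▸ hv)
    -- edges of Z give toSubgraph adjacency
    have hZadjE : ∀ a b : V, s(a, b) ∈ Z.edges → Z.toSubgraph.Adj a b := fun a b h =>
      SimpleGraph.Subgraph.mem_edgeSet.1 ((Walk.mem_edges_toSubgraph Z).2 h)
    have hZc54 : Z.toSubgraph.Adj (p 5) (p 4) := by
      apply hZadjE; rw [hZedges]; exact List.mem_append_right _ (by simp)
    have hZc43 : Z.toSubgraph.Adj (p 4) (p 3) := by
      apply hZadjE; rw [hZedges]; exact List.mem_append_right _ (by simp)
    have hZc32 : Z.toSubgraph.Adj (p 3) (p 2) := by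
      apply hZadjE; rw [hZedges]; exact List.mem_append_right _ (by simp)
    have hZc21 : Z.toSubgraph.Adj (p 2) (p 1) := by
      apply hZadjE; rw [hZedges]; exact List.mem_append_right _ (by simp)
    -- chord condition
    have hZs : ∀ s : ℕ, s = 2 ∨ s = 3 ∨ s = 4 → ∀ u ∈ Z.support, G.Adj (p s) u →
        Z.toSubgraph.Adj (p s) u := by
      intro s hs u hu hadj
      have h := hK3 s hs u (hZF u hu) hadj
      rcases hs with rfl | rfl | rfl
      · rcases h with h | h
        · exact h ▸ hZc21
        · exact h ▸ hZc32.symm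
      · rcases h with h | h
        · exact h ▸ hZc32
        · exact h ▸ hZc43.symm
      · rcases h with h | h
        · exact h ▸ hZc43
        · exact h ▸ hZc54.symm
    have hchord : ∀ x' ∈ Z.support, ∀ y' ∈ Z.support, G.Adj x' y' →
        Z.toSubgraph.Adj x' y' := by
      intro x' hx' y' hy' hadj
      rcases hZcases x' hx' with hxR | hx234
      · rcases hZcases y' hy' with hyR | hy234
        · -- both on the shortest path part
          have hxS : x' ∉ S := hqnotS x' (hRsup ▸ hxR)
          have hyS : y' ∉ S := hqnotS y' (hRsup ▸ hyR)
          have hKadj : K.Adj x' y' := ⟨hadj, hxS, hyS⟩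
          have hqadj := shortest_walk_induced' hqmin
            (show x' ∈ q.support from hRsup ▸ hxR)
            (show y' ∈ q.support from hRsup ▸ hyR) hKadj
          apply hZadjE
          rw [hZedges]
          refine List.mem_append_left _ ?_
          rw [hRedges]
          exact (Walk.mem_edges_toSubgraph q).1 (SimpleGraph.Subgraph.mem_edgeSet.2 hqadj)
        · rcases hy234 with h | h | h
          · subst h; exact (hZs 2 (Or.inl rfl) x' hx' hadj.symm).symm
          · subst h; exact (hZs 3 (Or.inr (Or.inl rfl)) x' hx' hadj.symm).symm
          · subst h; exact (hZs 4 (Or.inr (Or.inr rfl)) x' hx' hadj.symm).symm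
      · rcases hx234 with h | h | h
        · subst h; exact hZs 2 (Or.inl rfl) y' hy' hadj
        · subst h; exact hZs 3 (Or.inr (Or.inl rfl)) y' hy' hadj
        · subst h; exact hZs 4 (Or.inr (Or.inr rfl)) y' hy' hadj
    exact ⟨p 1, Z, ⟨hZcyc, by omega, hchord⟩, hZF⟩
  · -- Case A : F uses only edges of c
    have hFc : ∀ {a b : V}, F.toSubgraph.Adj a b → c.toSubgraph.Adj a b := by
      intro a b h
      rcases hedge h with h' | ⟨j, hj⟩
      · exact h'
      · exfalso
        apply hJ
        have hL := hearLen j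
        obtain ⟨r, hr, hrl⟩ := (Walk.toSubgraph_adj_iff _).1 hj
        have haF : a ∈ F.support := (Walk.mem_verts_toSubgraph F).1 h.fst_mem
        have hbF : b ∈ F.support := (Walk.mem_verts_toSubgraph F).1 h.snd_mem
        rcases Nat.eq_zero_or_pos r with h0 | h0
        · refine ⟨j, (d.ear j).getVert 1, ?_, getVert_mem_support' _ _,
            (hInt j 1 (by omega) (by omega)).2.2⟩
          rw [h0] at hr
          rw [Sym2.eq_iff] at hr
          simp only [Nat.zero_add] at hr
          rcases hr with ⟨h1, h2⟩ | ⟨h1, h2⟩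
          · rw [h2]; exact hbF
          · rw [h2]; exact haF
        · refine ⟨j, (d.ear j).getVert r, ?_, getVert_mem_support' _ _,
            (hInt j r (by omega) (by omega)).2.2⟩
          rw [Sym2.eq_iff] at hr
          rcases hr with ⟨h1, h2⟩ | ⟨h1, h2⟩
          · rw [h1]; exact haF
          · rw [h1]; exact hbF
    have hFinC : ∀ v ∈ F.support, v ∈ c.support := by
      intro v hv
      obtain ⟨x, y, -, hvx, -⟩ := cycle_two_nbrs' hF hv
      exact (Walk.mem_verts_toSubgraph c).1 (hFc hvx).fst_mem
    have hkey : ∀ v ∈ F.support, ∀ u, c.toSubgraph.Adj v u → F.toSubgraph.Adj v u := by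
      intro v hv u hadj
      obtain ⟨x, y, hxy, hvx, hvy⟩ := cycle_two_nbrs' hF hv
      obtain ⟨n₁, n₂, hpin⟩ := cycle_adj_pin' hcCyc (hFinC v hv)
      have hx := hpin x (hFc hvx)
      have hy := hpin y (hFc hvy)
      have hu := hpin u hadj
      have hxyu : u = x ∨ u = y := by
        rcases hx with hx | hx <;> rcases hy with hy | hy
        · exact absurd (hx.trans hy.symm) hxy
        · rcases hu with hu | hu
          · exact Or.inl (hu.trans hx.symm)
          · exact Or.inr (hu.trans hy.symm)
        · rcases hu with hu | hu
          · exact Or.inr (hu.trans hy.symm)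
          · exact Or.inl (hu.trans hx.symm)
        · exact absurd (hx.trans hy.symm) hxy
      rcases hxyu with h | h
      · rw [h]; exact hvx
      · rw [h]; exact hvy
    have hchord : ∀ a ∈ F.support, ∀ b ∈ F.support, G.Adj a b → F.toSubgraph.Adj a b := by
      intro a ha b hb hadj
      exact hkey a ha b (hcInd a (hFinC a ha) b (hFinC b hb) hadj)
    have hclosed : ∀ v ∈ F.support, ∀ u, c.toSubgraph.Adj v u → u ∈ F.support := by
      intro v hv u hadj
      exact (Walk.mem_verts_toSubgraph F).1 (hkey v hv u hadj).snd_mem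
    have htF : t ∈ F.support := F.start_mem_support
    have htC : t ∈ c.support := hFinC t htF
    have hCinF : ∀ u ∈ c.support, u ∈ F.support := by
      have hwalkind : ∀ (a b : c.toSubgraph.verts) (W : c.toSubgraph.coe.Walk a b),
          (a : V) ∈ F.support → (b : V) ∈ F.support := by
        intro a b W
        induction W with
        | nil => exact id
        | cons h w ih => exact fun ha => ih (hclosed _ ha _ h)
      intro u hu
      have hconn : c.toSubgraph.coe.Connected :=
        SimpleGraph.Subgraph.connected_iff'.1 (Walk.toSubgraph_connected c)
      obtain ⟨W⟩ := hconn.preconnected ⟨t, (Walk.mem_verts_toSubgraph c).2 htC⟩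
        ⟨u, (Walk.mem_verts_toSubgraph c).2 hu⟩
      exact hwalkind _ _ W htF
    have hsetEq : F.support.toFinset = c.support.toFinset := by
      ext v
      simp only [List.mem_toFinset]
      exact ⟨fun h => hFinC v h, fun h => hCinF v h⟩
    have hlenF : F.length = c.length := by
      have h1 := cycle_support_card' hF
      have h2 := cycle_support_card' hcCyc
      rw [← h1, ← h2, hsetEq]
    exact ⟨t, F, ⟨hF, by omega, hchord⟩, fun x hx => hx⟩
end
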